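/- arXiv:2505.12687 — 4 statements merged into one kernel-verified Lean document; each statement's English description precedes it below -/
import Mathlib

section
/- Let k ≥ 2, q ≥ 3, and r > 2k be integers, and let n be a positive integer divisible by q!. Then q·ρ_{n,1} ∈ ℤ, q·ρ_{n,a/q} ∈ ℤ for each integer a with 1 ≤ a < q/2, and d_{rqn}^k · ρ_{n,0} ∈ ℤ, where d_m = lcm{1,2,…,m}. -/
open Finset

/-- Pochhammer symbol `(x)_m = x(x+1)⋯(x+m−1)` over ℝ. -/
noncomputable def poch (x : ℝ) (m : ℕ) : ℝ := ∏ i ∈ Finset.range m, (x + i)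

/-- The coefficients `C_{n,j}` of the partial fraction decomposition of `R_n`. -/
noncomputable def Cnj (k q r n j : ℕ) : ℝ :=
  (-1 : ℝ) ^ j * (Nat.choose (r * q * n) j) * ((r * q * n : ℝ) - 2 * j) ^ (1 - k % 2) *
    (q : ℝ) ^ (2 * k * q * n) *
    (∏ p ∈ Nat.primeFactors q, (p : ℝ) ^ (2 * k * q * n / (p - 1))) *
    (poch (-(j : ℝ) / q - (q : ℝ) * n) (q * n)) ^ k *
    (poch (-(j : ℝ) / q + (r : ℝ) * n + 1) (q * n)) ^ k /
    ((Nat.factorial (q * n) : ℝ)) ^ (2 * k)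

/-- `ρ_{n,0}`. -/
noncomputable def rho0 (k q r n : ℕ) : ℝ :=
  ((-1 : ℝ) ^ k / q) *
    ((∑ j ∈ Finset.Icc 1 (r * n), ∑ m ∈ Finset.Icc 1 j, Cnj k q r n (q * j) / (m : ℝ) ^ k) +
      ∑ a ∈ Finset.Icc 1 (q - 1), ∑ j ∈ Finset.range (r * n), ∑ m ∈ Finset.range (j + 1),
        Cnj k q r n (q * j + a) / ((m : ℝ) + (a : ℝ) / q) ^ k)

/-- `ρ_{n,a/q}` for `1 ≤ a < q`. -/
noncomputable def rhoA (k q r n a : ℕ) : ℝ :=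
  ((-1 : ℝ) ^ (k - 1) / q) * ∑ j ∈ Finset.range (r * n), Cnj k q r n (q * j + a)

/-- `ρ_{n,1}`. -/
noncomputable def rho1 (k q r n : ℕ) : ℝ :=
  ((-1 : ℝ) ^ (k - 1) / q) * (∑ j ∈ Finset.range (r * n + 1), Cnj k q r n (q * j)) +
    (if Even q then (1 : ℝ) else 0) * (2 ^ k - 1) * rhoA k q r n (q / 2)

def Aprod (q a l m : ℕ) : ℕ := ∏ i ∈ Finset.range m, (a + q * (l + 1 + i))
def Bprod (q a u m : ℕ) : ℕ := ∏ i ∈ Finset.range m, (q * (u + 1 + i) - a)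
def Dnat (k q n : ℕ) : ℕ := ∏ p ∈ Nat.primeFactors q, p ^ (2 * k * q * n / (p - 1))

lemma prod_range_add_eq_ascFactorial (b m : ℕ) :
    ∏ i ∈ Finset.range m, (b + i) = b.ascFactorial m := by
  induction m with
  | zero => simp
  | succ m ih => rw [Finset.prod_range_succ, ih, Nat.ascFactorial_succ, mul_comm]

lemma aux1 (c m q l : ℕ) (hc : c ∣ m.factorial) (hq : Nat.Coprime q c) (a : ZMod c) :
    (∏ i ∈ Finset.range m, (a + (q : ZMod c) * ((l : ZMod c) + 1 + (i : ZMod c)))) = 0 := by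
  have hc0 : c ≠ 0 := by
    rintro rfl
    exact absurd (Nat.eq_zero_of_zero_dvd hc) (Nat.factorial_ne_zero m)
  haveI : NeZero c := ⟨hc0⟩
  obtain ⟨u, hu⟩ := (ZMod.isUnit_iff_coprime q c).mpr hq
  obtain ⟨b, hb⟩ := ZMod.natCast_zmod_surjective (((u⁻¹ : (ZMod c)ˣ) : ZMod c) * a)
  have hqb : (q : ZMod c) * (b : ZMod c) = a := by
    rw [hb, ← hu, ← mul_assoc]
    rw [Units.mul_inv, one_mul]
  have hfac : ∀ i ∈ Finset.range m,
      a + (q : ZMod c) * ((l : ZMod c) + 1 + (i : ZMod c))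
        = (q : ZMod c) * (((b + l + 1 + i : ℕ) : ZMod c)) := by
    intro i _
    push_cast
    rw [← hqb]
    ring
  rw [Finset.prod_congr rfl hfac, Finset.prod_mul_distrib, Finset.prod_const,
    Finset.card_range]
  have : (∏ i ∈ Finset.range m, (((b + l + 1 + i : ℕ) : ZMod c))) = 0 := by
    rw [← Nat.cast_prod, prod_range_add_eq_ascFactorial]
    exact (ZMod.natCast_eq_zero_iff _ c).mpr
      (hc.trans (Nat.factorial_dvd_ascFactorial _ _))
  rw [this, mul_zero]

lemma dvd_Aprod (c q a l m : ℕ) (hc : c ∣ m.factorial) (hq : Nat.Coprime q c) :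
    c ∣ Aprod q a l m := by
  have hc0 : c ≠ 0 := by
    rintro rfl
    exact absurd (Nat.eq_zero_of_zero_dvd hc) (Nat.factorial_ne_zero m)
  haveI : NeZero c := ⟨hc0⟩
  rw [← ZMod.natCast_eq_zero_iff]
  rw [Aprod]
  push_cast
  exact aux1 c m q l hc hq (a : ZMod c)

lemma dvd_Bprod (c q a u m : ℕ) (hc : c ∣ m.factorial) (hq : Nat.Coprime q c)
    (ha : a < q) : c ∣ Bprod q a u m := by
  have hc0 : c ≠ 0 := by
    rintro rfl
    exact absurd (Nat.eq_zero_of_zero_dvd hc) (Nat.factorial_ne_zero m)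
  haveI : NeZero c := ⟨hc0⟩
  rw [← ZMod.natCast_eq_zero_iff]
  rw [Bprod, Nat.cast_prod]
  have hstep : ∀ i ∈ Finset.range m,
      ((q * (u + 1 + i) - a : ℕ) : ZMod c)
        = (-(a : ZMod c)) + (q : ZMod c) * ((u : ZMod c) + 1 + (i : ZMod c)) := by
    intro i _
    have h : a ≤ q * (u + 1 + i) := by
      have h1 : q * 1 ≤ q * (u + 1 + i) := Nat.mul_le_mul_left q (by omega)
      omega
    push_cast [h]
    ring
  rw [Finset.prod_congr rfl hstep]
  exact aux1 c m q u hc hq _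

lemma Aprod_ne_zero (q a l m : ℕ) (hq : 0 < q) : Aprod q a l m ≠ 0 := by
  rw [Aprod, Finset.prod_ne_zero_iff]
  intro i _
  have : 0 < q * (l + 1 + i) := Nat.mul_pos hq (by omega)
  omega

lemma Bprod_ne_zero (q a u m : ℕ) (ha : a < q) : Bprod q a u m ≠ 0 := by
  rw [Bprod, Finset.prod_ne_zero_iff]
  intro i _
  have : q * 1 ≤ q * (u + 1 + i) := Nat.mul_le_mul_left q (by omega)
  omega

lemma main_dvd (k q n a l u : ℕ) (hq : 3 ≤ q) (hn : 0 < n) (ha : a < q) :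
    ((q * n).factorial) ^ (2 * k) ∣
      Dnat k q n * (Aprod q a l (q * n)) ^ k * (Bprod q a u (q * n)) ^ k := by
  have hq0 : 0 < q := by omega
  have hA0 : Aprod q a l (q * n) ≠ 0 := Aprod_ne_zero _ _ _ _ hq0
  have hB0 : Bprod q a u (q * n) ≠ 0 := Bprod_ne_zero _ _ _ _ ha
  have hD0 : Dnat k q n ≠ 0 := by
    rw [Dnat, Finset.prod_ne_zero_iff]
    intro p hp
    exact pow_ne_zero _ (Nat.Prime.ne_zero (Nat.prime_of_mem_primeFactors hp))
  have hF0 : ((q * n).factorial) ≠ 0 := Nat.factorial_ne_zero _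
  rw [← Nat.factorization_le_iff_dvd (pow_ne_zero _ hF0)
    (by exact mul_ne_zero (mul_ne_zero hD0 (pow_ne_zero _ hA0)) (pow_ne_zero _ hB0))]
  rw [Finsupp.le_def]
  intro p
  by_cases hp : p.Prime
  · rw [Nat.factorization_pow, Finsupp.smul_apply, smul_eq_mul]
    set v := ((q * n).factorial).factorization p with hv
    suffices h : p ^ (2 * k * v) ∣
        Dnat k q n * (Aprod q a l (q * n)) ^ k * (Bprod q a u (q * n)) ^ k by
      have := (Nat.Prime.pow_dvd_iff_le_factorization hp
        (by exact mul_ne_zero (mul_ne_zero hD0 (pow_ne_zero _ hA0)) (pow_ne_zero _ hB0))).mp h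
      omega
    by_cases hpq : p ∣ q
    · haveI : Fact p.Prime := ⟨hp⟩
      have hple : (p - 1) * v ≤ q * n := by
        rw [hv, Nat.factorization_def _ hp]
        calc (p - 1) * padicValNat p ((q * n).factorial)
            = q * n - (p.digits (q * n)).sum := sub_one_mul_padicValNat_factorial (q * n)
          _ ≤ q * n := Nat.sub_le _ _
      have h2 : 2 * k * v ≤ 2 * k * q * n / (p - 1) := by
        rw [Nat.le_div_iff_mul_le (by have := hp.two_le; omega)]
        calc 2 * k * v * (p - 1) = 2 * k * ((p - 1) * v) := by ring
          _ ≤ 2 * k * (q * n) := Nat.mul_le_mul_left _ hple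
          _ = 2 * k * q * n := by ring
      have hmem : p ∈ q.primeFactors := Nat.mem_primeFactors.mpr ⟨hp, hpq, by omega⟩
      have hd : p ^ (2 * k * q * n / (p - 1)) ∣ Dnat k q n :=
        Finset.dvd_prod_of_mem _ hmem
      exact dvd_mul_of_dvd_left (dvd_mul_of_dvd_left ((pow_dvd_pow p h2).trans hd) _) _
    · have hcop : Nat.Coprime q (p ^ v) :=
        Nat.Coprime.pow_right v ((hp.coprime_iff_not_dvd.mpr hpq).symm)
      have hdvdfac : p ^ v ∣ ((q * n).factorial) := Nat.ordProj_dvd _ _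
      have h1 : p ^ v ∣ Aprod q a l (q * n) := dvd_Aprod _ _ _ _ _ hdvdfac hcop
      have h2 : p ^ v ∣ Bprod q a u (q * n) := dvd_Bprod _ _ _ _ _ hdvdfac hcop ha
      calc p ^ (2 * k * v) = (p ^ v) ^ k * (p ^ v) ^ k := by
            rw [← pow_add, ← pow_mul]; congr 1; ring
        _ ∣ (Aprod q a l (q * n)) ^ k * (Bprod q a u (q * n)) ^ k :=
            mul_dvd_mul (pow_dvd_pow_of_dvd h1 k) (pow_dvd_pow_of_dvd h2 k)
        _ ∣ Dnat k q n * (Aprod q a l (q * n)) ^ k * (Bprod q a u (q * n)) ^ k := by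
            rw [mul_assoc]; exact dvd_mul_left _ _
  · simp [Nat.factorization_eq_zero_of_not_prime _ hp]

lemma main_dvd0 (k q n l u : ℕ) (hk : 1 ≤ k) (hq : 3 ≤ q) (hn : 0 < n) :
    q ^ 2 * ((q * n).factorial) ^ (2 * k) ∣
      Dnat k q n * (Aprod q 0 l (q * n)) ^ k * (Bprod q 0 u (q * n)) ^ k := by
  have hA : Aprod q 0 l (q * n) = q ^ (q * n) * (l + 1).ascFactorial (q * n) := by
    rw [Aprod]
    calc ∏ i ∈ Finset.range (q * n), (0 + q * (l + 1 + i))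
        = ∏ i ∈ Finset.range (q * n), q * ((l + 1) + i) :=
          Finset.prod_congr rfl (fun i _ => by ring)
      _ = q ^ (q * n) * (l + 1).ascFactorial (q * n) := by
          rw [Finset.prod_mul_distrib, Finset.prod_const, Finset.card_range,
            prod_range_add_eq_ascFactorial]
  have hB : Bprod q 0 u (q * n) = q ^ (q * n) * (u + 1).ascFactorial (q * n) := by
    rw [Bprod]
    calc ∏ i ∈ Finset.range (q * n), (q * (u + 1 + i) - 0)
        = ∏ i ∈ Finset.range (q * n), q * ((u + 1) + i) :=
          Finset.prod_congr rfl (fun i _ => by rw [Nat.sub_zero])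
      _ = q ^ (q * n) * (u + 1).ascFactorial (q * n) := by
          rw [Finset.prod_mul_distrib, Finset.prod_const, Finset.card_range,
            prod_range_add_eq_ascFactorial]
  have hkey : q ^ 2 * ((q * n).factorial) ^ (2 * k) ∣
      (q ^ (q * n)) ^ k * (q ^ (q * n)) ^ k *
        (((l + 1).ascFactorial (q * n)) ^ k * ((u + 1).ascFactorial (q * n)) ^ k) := by
    apply mul_dvd_mul
    · have h2 : 2 ≤ (q * n) * k := by
        have h3 : 3 * 1 ≤ q * n := Nat.mul_le_mul hq hn
        have h4 : (q * n) * 1 ≤ (q * n) * k := Nat.mul_le_mul_left _ hk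
        omega
      calc q ^ 2 ∣ q ^ ((q * n) * k) := pow_dvd_pow q h2
        _ ∣ (q ^ (q * n)) ^ k * (q ^ (q * n)) ^ k := by
            rw [← pow_mul]; exact dvd_mul_right _ _
    · rw [two_mul, pow_add]
      exact mul_dvd_mul
        (pow_dvd_pow_of_dvd (Nat.factorial_dvd_ascFactorial _ _) k)
        (pow_dvd_pow_of_dvd (Nat.factorial_dvd_ascFactorial _ _) k)
  have hre : Dnat k q n * (Aprod q 0 l (q * n)) ^ k * (Bprod q 0 u (q * n)) ^ k =
      ((q ^ (q * n)) ^ k * (q ^ (q * n)) ^ k *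
        (((l + 1).ascFactorial (q * n)) ^ k * ((u + 1).ascFactorial (q * n)) ^ k)) *
        Dnat k q n := by
    rw [hA, hB]; ring
  rw [hre]
  exact Dvd.dvd.mul_right hkey _
lemma poch_mul_pow (q m : ℕ) (x : ℝ) (hq : q ≠ 0) :
    (q : ℝ) ^ m * poch x m = ∏ i ∈ Finset.range m, ((q : ℝ) * x + q * i) := by
  have hc : (q : ℝ) ^ m = ∏ _i ∈ Finset.range m, (q : ℝ) := by
    rw [Finset.prod_const, Finset.card_range]
  rw [poch, hc, ← Finset.prod_mul_distrib]
  exact Finset.prod_congr rfl (fun i _ => by ring)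

lemma pochA (q n j j' a : ℕ) (hq3 : 3 ≤ q) (hj : j = q * j' + a) :
    (q : ℝ) ^ (q * n) * poch (-(j : ℝ) / q - (q : ℝ) * n) (q * n)
      = (-1 : ℝ) ^ (q * n) * (Aprod q a j' (q * n) : ℝ) := by
  have hq0 : (q : ℝ) ≠ 0 := by positivity
  have hjr : (j : ℝ) = q * j' + a := by rw [hj]; push_cast; ring
  rw [poch_mul_pow _ _ _ (by omega)]
  calc ∏ i ∈ Finset.range (q * n), ((q : ℝ) * (-(j : ℝ) / q - (q : ℝ) * n) + q * i)
      = ∏ i ∈ Finset.range (q * n),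
          (-(((a + q * (j' + 1 + (q * n - 1 - i)) : ℕ) : ℝ))) := by
        refine Finset.prod_congr rfl (fun i hi => ?_)
        have hi' : i < q * n := Finset.mem_range.mp hi
        have h1 : a + q * (j' + 1 + (q * n - 1 - i)) = a + q * (j' + (q * n - i)) := by
          congr 2
          omega
        rw [h1]
        have h2 : ((q * n - i : ℕ) : ℝ) = (q : ℝ) * n - i := by
          push_cast [Nat.cast_sub hi'.le]
          ring
        push_cast [h2]
        rw [hjr]
        field_simp
        ring
    _ = ∏ i ∈ Finset.range (q * n), (-(((a + q * (j' + 1 + i) : ℕ) : ℝ))) :=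
        Finset.prod_range_reflect (fun i => -(((a + q * (j' + 1 + i) : ℕ) : ℝ))) (q * n)
    _ = (-1 : ℝ) ^ (q * n) * (Aprod q a j' (q * n) : ℝ) := by
        rw [Aprod]
        push_cast
        calc ∏ i ∈ Finset.range (q * n), -((a : ℝ) + q * (j' + 1 + i))
            = ∏ i ∈ Finset.range (q * n), (-1 : ℝ) * ((a : ℝ) + q * (j' + 1 + i)) :=
              Finset.prod_congr rfl (fun i _ => by ring)
          _ = (-1 : ℝ) ^ (q * n) * ∏ i ∈ Finset.range (q * n), ((a : ℝ) + q * (j' + 1 + i)) := by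
              rw [Finset.prod_mul_distrib, Finset.prod_const, Finset.card_range]

lemma pochB (q r n j j' a : ℕ) (hq3 : 3 ≤ q) (hj : j = q * j' + a) (hj' : j' ≤ r * n)
    (ha : a < q) :
    (q : ℝ) ^ (q * n) * poch (-(j : ℝ) / q + (r : ℝ) * n + 1) (q * n)
      = (Bprod q a (r * n - j') (q * n) : ℝ) := by
  have hq0 : (q : ℝ) ≠ 0 := by positivity
  have hjr : (j : ℝ) = q * j' + a := by rw [hj]; push_cast; ring
  rw [poch_mul_pow _ _ _ (by omega), Bprod, Nat.cast_prod]
  refine Finset.prod_congr rfl (fun i hi => ?_)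
  have h : a ≤ q * ((r * n - j') + 1 + i) := by
    have h1 : q * 1 ≤ q * ((r * n - j') + 1 + i) := Nat.mul_le_mul_left q (by omega)
    omega
  rw [Nat.cast_sub h]
  have h2 : ((r * n - j' : ℕ) : ℝ) = (r : ℝ) * n - j' := by
    push_cast [Nat.cast_sub hj']
    ring
  push_cast [h2]
  rw [hjr]
  field_simp
  ring

lemma Cnj_eq (k q r n a j' : ℕ) (hq : 3 ≤ q) (ha : a < q) (hj' : j' ≤ r * n) :
    Cnj k q r n (q * j' + a)
      = (((-1 : ℤ) ^ (q * j' + a + k * (q * n)) * (Nat.choose (r * q * n) (q * j' + a)) *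
          ((r * q * n : ℤ) - 2 * (q * j' + a)) ^ (1 - k % 2) : ℤ) : ℝ) *
        ((Dnat k q n * (Aprod q a j' (q * n)) ^ k * (Bprod q a (r * n - j') (q * n)) ^ k : ℕ) : ℝ) /
        ((Nat.factorial (q * n) : ℝ)) ^ (2 * k) := by
  have hq0 : (q : ℝ) ≠ 0 := by positivity
  rw [Cnj]
  congr 1
  have key : (q : ℝ) ^ (2 * k * q * n) *
      (poch (-((q * j' + a : ℕ) : ℝ) / q - (q : ℝ) * n) (q * n)) ^ k *
      (poch (-((q * j' + a : ℕ) : ℝ) / q + (r : ℝ) * n + 1) (q * n)) ^ k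
      = (-1 : ℝ) ^ (k * (q * n)) * ((Aprod q a j' (q * n) : ℝ)) ^ k *
        ((Bprod q a (r * n - j') (q * n) : ℝ)) ^ k := by
    have e : (q : ℝ) ^ (2 * k * q * n) = ((q : ℝ) ^ (q * n)) ^ k * ((q : ℝ) ^ (q * n)) ^ k := by
      rw [← pow_mul, ← pow_add]
      congr 1
      ring
    calc (q : ℝ) ^ (2 * k * q * n) *
        (poch (-((q * j' + a : ℕ) : ℝ) / q - (q : ℝ) * n) (q * n)) ^ k *
        (poch (-((q * j' + a : ℕ) : ℝ) / q + (r : ℝ) * n + 1) (q * n)) ^ k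
        = ((q : ℝ) ^ (q * n) * poch (-((q * j' + a : ℕ) : ℝ) / q - (q : ℝ) * n) (q * n)) ^ k *
          ((q : ℝ) ^ (q * n) * poch (-((q * j' + a : ℕ) : ℝ) / q + (r : ℝ) * n + 1) (q * n)) ^ k := by
          rw [e, mul_pow, mul_pow]; ring
      _ = ((-1 : ℝ) ^ (q * n) * (Aprod q a j' (q * n) : ℝ)) ^ k *
          ((Bprod q a (r * n - j') (q * n) : ℝ)) ^ k := by
          rw [pochA q n (q * j' + a) j' a hq rfl, pochB q r n (q * j' + a) j' a hq rfl hj' ha]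
      _ = (-1 : ℝ) ^ (k * (q * n)) * ((Aprod q a j' (q * n) : ℝ)) ^ k *
          ((Bprod q a (r * n - j') (q * n) : ℝ)) ^ k := by
          rw [mul_pow, ← pow_mul, Nat.mul_comm (q * n) k]
  calc (-1 : ℝ) ^ (q * j' + a) * ((r * q * n).choose (q * j' + a) : ℝ) *
        ((r * q * n : ℝ) - 2 * ((q * j' + a : ℕ) : ℝ)) ^ (1 - k % 2) *
        (q : ℝ) ^ (2 * k * q * n) *
        (∏ p ∈ Nat.primeFactors q, (p : ℝ) ^ (2 * k * q * n / (p - 1))) *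
        (poch (-((q * j' + a : ℕ) : ℝ) / q - (q : ℝ) * n) (q * n)) ^ k *
        (poch (-((q * j' + a : ℕ) : ℝ) / q + (r : ℝ) * n + 1) (q * n)) ^ k
      = (-1 : ℝ) ^ (q * j' + a) * ((r * q * n).choose (q * j' + a) : ℝ) *
        ((r * q * n : ℝ) - 2 * ((q * j' + a : ℕ) : ℝ)) ^ (1 - k % 2) *
        (∏ p ∈ Nat.primeFactors q, (p : ℝ) ^ (2 * k * q * n / (p - 1))) *
        ((q : ℝ) ^ (2 * k * q * n) *
          (poch (-((q * j' + a : ℕ) : ℝ) / q - (q : ℝ) * n) (q * n)) ^ k *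
          (poch (-((q * j' + a : ℕ) : ℝ) / q + (r : ℝ) * n + 1) (q * n)) ^ k) := by ring
    _ = _ := by
        rw [key, Dnat]
        push_cast
        ring

lemma Cnj_int (k q r n a j' : ℕ) (hq : 3 ≤ q) (hn : 0 < n) (ha : a < q) (hj' : j' ≤ r * n) :
    ∃ z : ℤ, Cnj k q r n (q * j' + a) = (z : ℝ) := by
  obtain ⟨w, hw⟩ := main_dvd k q n a j' (r * n - j') hq hn ha
  refine ⟨(-1 : ℤ) ^ (q * j' + a + k * (q * n)) * ((r * q * n).choose (q * j' + a)) *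
    ((r * q * n : ℤ) - 2 * (q * j' + a)) ^ (1 - k % 2) * w, ?_⟩
  rw [Cnj_eq k q r n a j' hq ha hj', hw]
  have hF : ((Nat.factorial (q * n) : ℝ)) ^ (2 * k) ≠ 0 := by
    have := Nat.factorial_pos (q * n)
    positivity
  push_cast
  field_simp

lemma Cnj_q0 (k q r n j' : ℕ) (hk : 1 ≤ k) (hq : 3 ≤ q) (hn : 0 < n) (hj' : j' ≤ r * n) :
    ∃ z : ℤ, Cnj k q r n (q * j') = (q : ℝ) ^ 2 * (z : ℝ) := by
  obtain ⟨w, hw⟩ := main_dvd0 k q n j' (r * n - j') hk hq hn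
  refine ⟨(-1 : ℤ) ^ (q * j' + 0 + k * (q * n)) * ((r * q * n).choose (q * j' + 0)) *
    ((r * q * n : ℤ) - 2 * (q * j' + 0)) ^ (1 - k % 2) * w, ?_⟩
  have h0 : Cnj k q r n (q * j') = Cnj k q r n (q * j' + 0) := by norm_num
  rw [h0, Cnj_eq k q r n 0 j' hq (by omega) hj', hw]
  have hF : ((Nat.factorial (q * n) : ℝ)) ^ (2 * k) ≠ 0 := by
    have := Nat.factorial_pos (q * n)
    positivity
  push_cast
  field_simp

lemma exists_int_sum_mul {ι : Type*} (C : ℝ) (s : Finset ι) (f : ι → ℝ)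
    (h : ∀ i ∈ s, ∃ z : ℤ, f i = C * z) : ∃ z : ℤ, ∑ i ∈ s, f i = C * z := by
  classical
  choose! g hg using h
  refine ⟨∑ i ∈ s, g i, ?_⟩
  rw [Finset.sum_congr rfl hg]
  push_cast
  rw [Finset.mul_sum]

lemma exists_int_sum {ι : Type*} (s : Finset ι) (f : ι → ℝ)
    (h : ∀ i ∈ s, ∃ z : ℤ, f i = z) : ∃ z : ℤ, ∑ i ∈ s, f i = z := by
  obtain ⟨z, hz⟩ := exists_int_sum_mul 1 s f
    (fun i hi => by obtain ⟨z, hz⟩ := h i hi; exact ⟨z, by rw [hz]; ring⟩)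
  exact ⟨z, by rw [hz]; ring⟩

theorem stmt_3 (k q r n : ℕ) (hk : 2 ≤ k) (hq : 3 ≤ q) (hr : 2 * k < r)
    (hn : 0 < n) (hfac : Nat.factorial q ∣ n) :
    (∃ z : ℤ, (q : ℝ) * rho1 k q r n = (z : ℝ)) ∧
    (∀ a : ℕ, 1 ≤ a → 2 * a < q → ∃ z : ℤ, (q : ℝ) * rhoA k q r n a = (z : ℝ)) ∧
    (∃ z : ℤ, (((Finset.Icc 1 (r * q * n)).lcm id : ℕ) : ℝ) ^ k * rho0 k q r n = (z : ℝ)) := by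
  have hq0 : (q : ℝ) ≠ 0 := by positivity
  have hk1 : 1 ≤ k := by omega
  have hrn_le : r * n ≤ r * q * n := by
    have h1 : r * n ≤ (r * q) * n := Nat.mul_le_mul_right n (Nat.le_mul_of_pos_right r (by omega))
    omega
  refine ⟨?_, ?_, ?_⟩
  · -- claim 1
    obtain ⟨Z1, hZ1⟩ : ∃ z : ℤ, ∑ j ∈ Finset.range (r * n + 1), Cnj k q r n (q * j) = (z : ℝ) := by
      refine exists_int_sum _ _ (fun j hj => ?_)
      obtain ⟨z, hz⟩ := Cnj_q0 k q r n j hk1 hq hn (by have := Finset.mem_range.mp hj; omega)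
      exact ⟨(q : ℤ) ^ 2 * z, by rw [hz]; push_cast; ring⟩
    by_cases hqe : Even q
    · obtain ⟨Z2, hZ2⟩ : ∃ z : ℤ,
          ∑ j ∈ Finset.range (r * n), Cnj k q r n (q * j + q / 2) = (z : ℝ) := by
        refine exists_int_sum _ _ (fun j hj => ?_)
        exact Cnj_int k q r n (q / 2) j hq hn (by omega)
          (by have := Finset.mem_range.mp hj; omega)
      refine ⟨(-1) ^ (k - 1) * Z1 + (2 ^ k - 1) * ((-1) ^ (k - 1) * Z2), ?_⟩
      rw [rho1, rhoA, if_pos hqe, hZ1, hZ2]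
      push_cast
      field_simp
    · refine ⟨(-1) ^ (k - 1) * Z1, ?_⟩
      rw [rho1, if_neg hqe, hZ1]
      push_cast
      field_simp
      simp
  · -- claim 2
    intro a ha1 ha2
    obtain ⟨Z, hZ⟩ : ∃ z : ℤ, ∑ j ∈ Finset.range (r * n), Cnj k q r n (q * j + a) = (z : ℝ) := by
      refine exists_int_sum _ _ (fun j hj => ?_)
      exact Cnj_int k q r n a j hq hn (by omega) (by have := Finset.mem_range.mp hj; omega)
    refine ⟨(-1) ^ (k - 1) * Z, ?_⟩
    rw [rhoA, hZ]
    push_cast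
    field_simp
  · -- claim 3
    set d := ((Finset.Icc 1 (r * q * n)).lcm id : ℕ) with hd
    obtain ⟨W1, hW1⟩ : ∃ W : ℤ, ∑ j ∈ Finset.Icc 1 (r * n), ∑ m ∈ Finset.Icc 1 j,
        (d : ℝ) ^ k * (Cnj k q r n (q * j) / (m : ℝ) ^ k) = (q : ℝ) * W := by
      refine exists_int_sum_mul _ _ _ (fun j hj => ?_)
      have hj' : j ≤ r * n := (Finset.mem_Icc.mp hj).2
      refine exists_int_sum_mul _ _ _ (fun m hm => ?_)
      have hm1 : 1 ≤ m := (Finset.mem_Icc.mp hm).1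
      have hmj : m ≤ j := (Finset.mem_Icc.mp hm).2
      obtain ⟨zc, hzc⟩ := Cnj_q0 k q r n j hk1 hq hn hj'
      have hmd : m ∣ d := Finset.dvd_lcm (Finset.mem_Icc.mpr ⟨hm1, by omega⟩)
      obtain ⟨e, he⟩ := hmd
      refine ⟨(q : ℤ) * (e : ℤ) ^ k * zc, ?_⟩
      have hm0 : (m : ℝ) ≠ 0 := Nat.cast_ne_zero.mpr (by omega)
      have hdc : (d : ℝ) = (m : ℝ) * (e : ℝ) := by exact_mod_cast congrArg (Nat.cast (R := ℝ)) he
      rw [hzc, hdc]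
      push_cast
      field_simp
      ring
    obtain ⟨W2, hW2⟩ : ∃ W : ℤ, ∑ a ∈ Finset.Icc 1 (q - 1), ∑ j ∈ Finset.range (r * n),
        ∑ m ∈ Finset.range (j + 1),
        (d : ℝ) ^ k * (Cnj k q r n (q * j + a) / ((m : ℝ) + (a : ℝ) / q) ^ k)
        = (q : ℝ) * W := by
      refine exists_int_sum_mul _ _ _ (fun a ha => ?_)
      have ha1 : 1 ≤ a := (Finset.mem_Icc.mp ha).1
      have haq : a < q := by have := (Finset.mem_Icc.mp ha).2; omega
      refine exists_int_sum_mul _ _ _ (fun j hj => ?_)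
      have hjrn : j < r * n := Finset.mem_range.mp hj
      refine exists_int_sum_mul _ _ _ (fun m hm => ?_)
      have hmj : m ≤ j := by have := Finset.mem_range.mp hm; omega
      obtain ⟨zc, hzc⟩ := Cnj_int k q r n a j hq hn haq (by omega)
      have hX2 : q * m + a ≤ r * q * n := by
        have h1 : q * (m + 1) ≤ q * (r * n) := Nat.mul_le_mul_left q (by omega)
        have h2 : q * (r * n) = r * q * n := by ring
        have h3 : q * (m + 1) = q * m + q := by ring
        omega
      have hXd : q * m + a ∣ d := Finset.dvd_lcm (Finset.mem_Icc.mpr ⟨by omega, hX2⟩)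
      obtain ⟨e, he⟩ := hXd
      refine ⟨(q : ℤ) ^ (k - 1) * (e : ℤ) ^ k * zc, ?_⟩
      have hX0 : ((q * m + a : ℕ) : ℝ) ≠ 0 := Nat.cast_ne_zero.mpr (by omega)
      have hdc : (d : ℝ) = ((q * m + a : ℕ) : ℝ) * (e : ℝ) := by
        exact_mod_cast congrArg (Nat.cast (R := ℝ)) he
      have hsplit : (m : ℝ) + (a : ℝ) / q = ((q * m + a : ℕ) : ℝ) / q := by
        push_cast
        field_simp
      have hqk : (q : ℝ) ^ k = (q : ℝ) * (q : ℝ) ^ (k - 1) := by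
        calc (q : ℝ) ^ k = (q : ℝ) ^ (k - 1 + 1) := by congr 1; omega
          _ = (q : ℝ) * (q : ℝ) ^ (k - 1) := by rw [pow_succ]; ring
      rw [hzc, hsplit, hdc, div_pow, div_div_eq_mul_div, mul_pow]
      push_cast
      rw [hqk]
      field_simp
    refine ⟨(-1) ^ k * (W1 + W2), ?_⟩
    calc (d : ℝ) ^ k * rho0 k q r n
        = ((-1 : ℝ) ^ k / q) *
          ((d : ℝ) ^ k * ∑ j ∈ Finset.Icc 1 (r * n), ∑ m ∈ Finset.Icc 1 j,
            Cnj k q r n (q * j) / (m : ℝ) ^ k +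
           (d : ℝ) ^ k * ∑ a ∈ Finset.Icc 1 (q - 1), ∑ j ∈ Finset.range (r * n),
            ∑ m ∈ Finset.range (j + 1),
            Cnj k q r n (q * j + a) / ((m : ℝ) + (a : ℝ) / q) ^ k) := by
          rw [rho0]; ring
      _ = ((-1 : ℝ) ^ k / q) *
          ((∑ j ∈ Finset.Icc 1 (r * n), ∑ m ∈ Finset.Icc 1 j,
            (d : ℝ) ^ k * (Cnj k q r n (q * j) / (m : ℝ) ^ k)) +
           (∑ a ∈ Finset.Icc 1 (q - 1), ∑ j ∈ Finset.range (r * n),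
            ∑ m ∈ Finset.range (j + 1),
            (d : ℝ) ^ k * (Cnj k q r n (q * j + a) / ((m : ℝ) + (a : ℝ) / q) ^ k))) := by
          simp only [Finset.mul_sum]
      _ = ((-1 : ℝ) ^ k / q) * ((q : ℝ) * W1 + (q : ℝ) * W2) := by rw [hW1, hW2]
      _ = (((-1) ^ k * (W1 + W2) : ℤ) : ℝ) := by
          push_cast
          field_simp
end

section
/- Let k ≥ 2, q ≥ 3, and r > 2k be integers. Set β = rq·log 2 + k((2q + r)·log(q + r/2) − r·log(r/2) + 2q ∑_{p | q, p prime} (log p)/(p − 1)). Then for every ε > 0 there exists N such that for every positive multiple n of q! with n ≥ N, max{|ρ_{n,0}|, |ρ_{n,1}|, |ρ_{n,a/q}| : 1 ≤ a < q/2} ≤ exp((β + ε)n). -/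
open Finset

/-- The constant `β = rq log 2 + k((2q+r)log(q+r/2) − r log(r/2) + 2q ∑_{p|q} log p/(p−1))`. -/
noncomputable def betaConst (k q r : ℕ) : ℝ :=
  (r : ℝ) * q * Real.log 2 +
    (k : ℝ) * (((2 * q + r : ℕ) : ℝ) * Real.log ((q : ℝ) + (r : ℝ) / 2)
      - (r : ℝ) * Real.log ((r : ℝ) / 2)
      + 2 * (q : ℝ) * ∑ p ∈ Nat.primeFactors q, Real.log p / ((p : ℝ) - 1))


lemma choose_le_two_pow' (n k : ℕ) : n.choose k ≤ 2 ^ n := by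
  rcases le_or_gt k n with h | h
  · calc n.choose k ≤ ∑ i ∈ range (n+1), n.choose i :=
        Finset.single_le_sum (fun i _ => Nat.zero_le _) (Finset.mem_range.2 (by omega))
      _ = 2 ^ n := Nat.sum_range_choose n
  · rw [Nat.choose_eq_zero_of_lt h]; exact Nat.zero_le _

lemma choose_mul_choose_le' (a b c d : ℕ) : a.choose c * b.choose d ≤ (a+b).choose (c+d) := by
  rw [Nat.add_choose_eq]
  exact Finset.single_le_sum (f := fun ij : ℕ × ℕ => a.choose ij.1 * b.choose ij.2)
    (fun i _ => Nat.zero_le _) (Finset.HasAntidiagonal.mem_antidiagonal.2 rfl) (a := (c, d))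

lemma choose_entropy (N K : ℕ) (h : K ≤ N) :
    N.choose K * K ^ K * (N - K) ^ (N - K) ≤ N ^ N := by
  have h1 : N = K + (N - K) := by omega
  calc N.choose K * K ^ K * (N - K) ^ (N - K)
      = K ^ K * (N - K) ^ (N - K) * N.choose K := by ring
    _ ≤ ∑ m ∈ range (N + 1), K ^ m * (N - K) ^ (N - m) * N.choose m :=
        Finset.single_le_sum (f := fun m => K ^ m * (N - K) ^ (N - m) * N.choose m)
          (fun i _ => Nat.zero_le _) (Finset.mem_range.2 (by omega))
    _ = (K + (N - K)) ^ N := (add_pow K (N - K) N).symm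
    _ = N ^ N := by rw [← h1]

noncomputable def Wc (q r : ℕ) : ℝ :=
  ((2*q+r : ℕ):ℝ) * Real.log ((q:ℝ)+(r:ℝ)/2) - (r:ℝ) * Real.log ((r:ℝ)/2)

lemma expW (q r n : ℕ) (hq : 1 ≤ q) (hr : 1 ≤ r) :
    Real.exp ((n:ℝ) * Wc q r)
      = ((2*q+r : ℕ):ℝ) ^ ((2*q+r)*n) / (2 ^ (2*q*n) * (r:ℝ) ^ (r*n)) := by
  have hc : (0:ℝ) < ((2*q+r : ℕ):ℝ) := by positivity
  have hrpos : (0:ℝ) < (r:ℝ) := by exact_mod_cast hr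
  have h1 : Real.log ((q:ℝ)+(r:ℝ)/2) = Real.log ((2*q+r : ℕ):ℝ) - Real.log 2 := by
    rw [show (q:ℝ)+(r:ℝ)/2 = ((2*q+r : ℕ):ℝ)/2 by push_cast; ring,
      Real.log_div (ne_of_gt hc) two_ne_zero]
  have h2 : Real.log ((r:ℝ)/2) = Real.log (r:ℝ) - Real.log 2 :=
    Real.log_div (ne_of_gt hrpos) two_ne_zero
  have e1 : ((2*q+r : ℕ):ℝ) ^ ((2*q+r)*n)
      = Real.exp ((((2*q+r)*n : ℕ):ℝ) * Real.log ((2*q+r : ℕ):ℝ)) := by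
    rw [Real.exp_nat_mul, Real.exp_log hc]
  have e2 : (2:ℝ) ^ (2*q*n) = Real.exp (((2*q*n : ℕ):ℝ) * Real.log 2) := by
    rw [Real.exp_nat_mul, Real.exp_log two_pos]
  have e3 : (r:ℝ) ^ (r*n) = Real.exp (((r*n : ℕ):ℝ) * Real.log (r:ℝ)) := by
    rw [Real.exp_nat_mul, Real.exp_log hrpos]
  rw [Wc, h1, h2, e1, e2, e3, ← Real.exp_add, ← Real.exp_sub]
  congr 1
  push_cast
  ring

lemma key_bound (q r n : ℕ) (hq : 1 ≤ q) (hr : 1 ≤ r) (hn : 1 ≤ n) :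
    (q:ℝ)^(2*q*n) * ((((2*q+r)*n+1).choose (2*q*n)) : ℝ) ≤
      Real.exp 1 * (((2*q+r)*n+1 : ℕ):ℝ) * Real.exp ((n:ℝ) * Wc q r) := by
  have hc : (0:ℝ) < ((2*q+r : ℕ):ℝ) := by positivity
  set E := (2*q+r)*n with hE
  set K := 2*q*n with hK
  set M := r*n+1 with hM
  have hEK : E = K + r*n := by rw [hE, hK]; ring
  have hKE : K ≤ E := by omega
  have hsub : E + 1 - K = M := by omega
  have hnat : (E+1).choose K * K ^ K * M ^ M ≤ (E+1) ^ (E+1) := by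
    have := choose_entropy (E+1) K (Nat.le_succ_of_le hKE)
    rwa [hsub] at this
  have hcast : ((E+1).choose K : ℝ) * (K:ℝ) ^ K * (M:ℝ) ^ M ≤ ((E+1 : ℕ):ℝ) ^ (E+1) := by
    exact_mod_cast hnat
  -- real abbreviations
  have hD : (0:ℝ) < ((E:ℕ):ℝ) := by
    have : 1 ≤ E := le_trans (le_trans (by rw [hK]; exact Nat.succ_le_of_lt (by positivity)) hKE) (le_refl E)
    exact_mod_cast this
  -- step (a): (E+1)^(E+1) ≤ e * (E+1) * E^E
  have stepa : (((E+1:ℕ)):ℝ) ^ (E+1) ≤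
      Real.exp 1 * ((E+1 : ℕ):ℝ) * ((E:ℕ):ℝ) ^ E := by
    have h1 : ((E+1 : ℕ):ℝ) = ((E:ℕ):ℝ) + 1 := by push_cast; ring
    have h2 : ((E:ℕ):ℝ) + 1 ≤ ((E:ℕ):ℝ) * Real.exp (1/((E:ℕ):ℝ)) := by
      have := Real.add_one_le_exp (1/((E:ℕ):ℝ))
      calc ((E:ℕ):ℝ) + 1 = ((E:ℕ):ℝ) * (1/((E:ℕ):ℝ) + 1) := by
            field_simp
            ring
        _ ≤ ((E:ℕ):ℝ) * Real.exp (1/((E:ℕ):ℝ)) := by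
            exact mul_le_mul_of_nonneg_left this (le_of_lt hD)
    calc ((E+1:ℕ):ℝ) ^ (E+1) = ((E+1:ℕ):ℝ) * ((E+1:ℕ):ℝ) ^ E := by ring
      _ ≤ ((E+1:ℕ):ℝ) * (((E:ℕ):ℝ) * Real.exp (1/((E:ℕ):ℝ))) ^ E := by
          refine mul_le_mul_of_nonneg_left (pow_le_pow_left₀ (by positivity) (h1 ▸ h2) E) (by positivity)
      _ = ((E+1:ℕ):ℝ) * ((E:ℕ):ℝ) ^ E * Real.exp (1/((E:ℕ):ℝ)) ^ E := by
          rw [mul_pow]; ring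
      _ = ((E+1:ℕ):ℝ) * ((E:ℕ):ℝ) ^ E * Real.exp 1 := by
          rw [← Real.exp_nat_mul]
          congr 2
          field_simp
      _ = Real.exp 1 * ((E+1:ℕ):ℝ) * ((E:ℕ):ℝ) ^ E := by ring
  -- abbreviations
  set c : ℝ := ((2*q+r : ℕ):ℝ) with hcdef
  have hrn1 : (1:ℝ) ≤ (r:ℝ)*n := by
    have h1 : (1:ℝ) ≤ (r:ℝ) := by exact_mod_cast hr
    have h2 : (1:ℝ) ≤ (n:ℝ) := by exact_mod_cast hn
    nlinarith
  have hYM : ((r:ℝ)*n) ^ (r*n) ≤ ((M:ℕ):ℝ) ^ M := by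
    have hMcast : ((M:ℕ):ℝ) = (r:ℝ)*n + 1 := by rw [hM]; push_cast; ring
    calc ((r:ℝ)*n) ^ (r*n) ≤ ((r:ℝ)*n + 1) ^ (r*n) :=
          pow_le_pow_left₀ (by linarith) (by linarith) _
      _ ≤ ((r:ℝ)*n + 1) ^ (r*n+1) := pow_le_pow_right₀ (by linarith) (by omega)
      _ = ((M:ℕ):ℝ) ^ M := by rw [hMcast, hM]
  have h2 : ((E+1).choose K : ℝ) * ((K:ℝ) ^ K * ((r:ℝ)*n) ^ (r*n)) ≤
      Real.exp 1 * ((E+1 : ℕ):ℝ) * ((E:ℕ):ℝ) ^ E := by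
    calc ((E+1).choose K : ℝ) * ((K:ℝ) ^ K * ((r:ℝ)*n) ^ (r*n))
        ≤ ((E+1).choose K : ℝ) * ((K:ℝ) ^ K * ((M:ℕ):ℝ) ^ M) := by
          refine mul_le_mul_of_nonneg_left ?_ (by positivity)
          exact mul_le_mul_of_nonneg_left hYM (by positivity)
      _ = ((E+1).choose K : ℝ) * (K:ℝ) ^ K * ((M:ℕ):ℝ) ^ M := by ring
      _ ≤ ((E+1 : ℕ):ℝ) ^ (E+1) := hcast
      _ ≤ Real.exp 1 * ((E+1 : ℕ):ℝ) * ((E:ℕ):ℝ) ^ E := stepa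
  have hid : (q:ℝ)^K * 2^K * (r:ℝ)^(r*n) * ((E:ℕ):ℝ)^E
      = c^E * ((K:ℝ)^K * ((r:ℝ)*n)^(r*n)) := by
    have e1 : ((E:ℕ):ℝ) = c * n := by rw [hE, hcdef]; push_cast; ring
    have e2 : ((K:ℕ):ℝ) = 2*(q:ℝ)*n := by rw [hK]; push_cast; ring
    rw [e1, e2, hEK, pow_add, mul_pow, pow_add]
    ring
  -- final assembly
  rw [expW q r n hq hr, ← hcdef]
  have hdiv : Real.exp 1 * (((2*q+r)*n+1 : ℕ):ℝ) * (c ^ ((2*q+r)*n) / (2 ^ (2*q*n) * (r:ℝ) ^ (r*n)))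
      = Real.exp 1 * ((E+1 : ℕ):ℝ) * c ^ E / (2 ^ K * (r:ℝ) ^ (r*n)) := by
    rw [hE, hK]; ring
  rw [hdiv, le_div_iff₀ (by positivity)]
  have hP : (0:ℝ) < (K:ℝ)^K * ((r:ℝ)*n)^(r*n) := by
    have : (0:ℝ) < (K:ℝ) := by
      have : 1 ≤ K := by rw [hK]; exact Nat.succ_le_of_lt (by positivity)
      exact_mod_cast this
    positivity
  refine le_of_mul_le_mul_right ?_ hP
  calc (q:ℝ)^(2*q*n) * ((E+1).choose K : ℝ) * (2 ^ K * (r:ℝ) ^ (r*n)) * ((K:ℝ)^K * ((r:ℝ)*n)^(r*n))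
      = (((E+1).choose K : ℝ) * ((K:ℝ)^K * ((r:ℝ)*n)^(r*n))) * ((q:ℝ)^K * 2^K * (r:ℝ)^(r*n)) := by
        rw [hK]; ring
    _ ≤ (Real.exp 1 * ((E+1 : ℕ):ℝ) * ((E:ℕ):ℝ) ^ E) * ((q:ℝ)^K * 2^K * (r:ℝ)^(r*n)) := by
        refine mul_le_mul_of_nonneg_right h2 (by positivity)
    _ = (Real.exp 1 * ((E+1 : ℕ):ℝ)) * ((q:ℝ)^K * 2^K * (r:ℝ)^(r*n) * ((E:ℕ):ℝ) ^ E) := by ring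
    _ = (Real.exp 1 * ((E+1 : ℕ):ℝ)) * (c^E * ((K:ℝ)^K * ((r:ℝ)*n)^(r*n))) := by rw [hid]
    _ = Real.exp 1 * ((E+1 : ℕ):ℝ) * c ^ E * ((K:ℝ)^K * ((r:ℝ)*n)^(r*n)) := by ring

lemma ascFactorial_prod (n k : ℕ) : ∏ i ∈ range k, (n + i) = n.ascFactorial k := by
  induction k with
  | zero => simp
  | succ k ih => rw [Finset.prod_range_succ, ih, Nat.ascFactorial_succ, Nat.mul_comm]

lemma abs_poch1_le (q n m a : ℕ) (hq : 1 ≤ q) (ha : a < q) :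
    |poch (-((q*m+a : ℕ):ℝ) / q - (q:ℝ) * n) (q*n)| ≤
      ((q*n).factorial : ℝ) * ((q*n+m+1).choose (q*n) : ℝ) := by
  have hq0 : (0:ℝ) < (q:ℝ) := by exact_mod_cast hq
  have haq : 0 ≤ (a:ℝ)/q ∧ (a:ℝ)/q ≤ 1 := by
    constructor
    · positivity
    · rw [div_le_one hq0]; exact_mod_cast ha.le
  calc |poch (-((q*m+a : ℕ):ℝ) / q - (q:ℝ) * n) (q*n)|
      = ∏ i ∈ range (q*n), |(-((q*m+a : ℕ):ℝ) / q - (q:ℝ) * n) + i| := abs_prod _ _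
    _ ≤ ∏ i ∈ range (q*n), ((q*n+m+1-i : ℕ):ℝ) := by
        refine Finset.prod_le_prod (fun i _ => abs_nonneg _) (fun i hi => ?_)
        have hi' : i < q*n := Finset.mem_range.1 hi
        have hcast : ((q*n+m+1-i : ℕ):ℝ) = (q:ℝ)*n+m+1-i := by
          rw [Nat.cast_sub (by omega)]; push_cast; ring
        have hx : (-((q*m+a : ℕ):ℝ) / q - (q:ℝ) * n) + i = (i:ℝ) - m - (a:ℝ)/q - (q:ℝ)*n := by
          push_cast
          field_simp
          ring
        rw [hx, hcast, abs_le]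
        have hiq : (i:ℝ) ≤ (q:ℝ)*n := by
          have : (i:ℕ) ≤ q*n := hi'.le
          exact_mod_cast this
        constructor <;> nlinarith [haq.1, haq.2, Nat.cast_nonneg (α := ℝ) m, Nat.cast_nonneg (α := ℝ) i]
    _ = (((q*n+m+1).descFactorial (q*n) : ℕ):ℝ) := by
        rw [Nat.descFactorial_eq_prod_range, Nat.cast_prod]
    _ = ((q*n).factorial : ℝ) * ((q*n+m+1).choose (q*n) : ℝ) := by
        rw [Nat.descFactorial_eq_factorial_mul_choose]; push_cast; ring

lemma abs_poch2_le (q r n m a : ℕ) (hq : 1 ≤ q) (ha : a < q) (hm : m ≤ r*n) :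
    |poch (-((q*m+a : ℕ):ℝ) / q + (r:ℝ)*n + 1) (q*n)| ≤
      ((q*n).factorial : ℝ) * (((r*n - m) + q*n).choose (q*n) : ℝ) := by
  have hq0 : (0:ℝ) < (q:ℝ) := by exact_mod_cast hq
  have haq : 0 ≤ (a:ℝ)/q ∧ (a:ℝ)/q ≤ 1 := by
    constructor
    · positivity
    · rw [div_le_one hq0]; exact_mod_cast ha.le
  have hrm : ((r*n - m : ℕ):ℝ) = (r:ℝ)*n - m := by
    rw [Nat.cast_sub hm]; push_cast; ring
  calc |poch (-((q*m+a : ℕ):ℝ) / q + (r:ℝ)*n + 1) (q*n)|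
      = ∏ i ∈ range (q*n), |(-((q*m+a : ℕ):ℝ) / q + (r:ℝ)*n + 1) + i| := abs_prod _ _
    _ ≤ ∏ i ∈ range (q*n), (((r*n-m)+1+i : ℕ):ℝ) := by
        refine Finset.prod_le_prod (fun i _ => abs_nonneg _) (fun i hi => ?_)
        have hcast : (((r*n-m)+1+i : ℕ):ℝ) = (r:ℝ)*n-m+1+i := by push_cast [hrm]; ring
        have hx : (-((q*m+a : ℕ):ℝ) / q + (r:ℝ)*n + 1) + i = (r:ℝ)*n + 1 - m - (a:ℝ)/q + i := by
          push_cast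
          field_simp
          ring
        have hmr : (m:ℝ) ≤ (r:ℝ)*n := by exact_mod_cast hm
        rw [hx, hcast, abs_le]
        constructor <;> nlinarith [haq.1, haq.2, Nat.cast_nonneg (α := ℝ) i]
    _ = ((((r*n-m)+1).ascFactorial (q*n) : ℕ):ℝ) := by
        rw [← ascFactorial_prod, Nat.cast_prod]
    _ = ((q*n).factorial : ℝ) * (((r*n - m) + q*n).choose (q*n) : ℝ) := by
        rw [Nat.ascFactorial_eq_factorial_mul_choose]; push_cast; ring

lemma cnj_le (k q r n : ℕ) (hq : 1 ≤ q) (hr : 1 ≤ r) (hn : 1 ≤ n) (m a : ℕ)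
    (hm : m ≤ r*n) (ha : a < q) (hj : q*m+a ≤ r*q*n) :
    |Cnj k q r n (q*m+a)| ≤
      ((r*q*n+1 : ℕ):ℝ) * (Real.exp 1 * (((2*q+r)*n+1 : ℕ):ℝ))^k
        * Real.exp (betaConst k q r * n) := by
  have hq0 : (0:ℝ) < (q:ℝ) := by exact_mod_cast hq
  set S : ℝ := ∑ p ∈ Nat.primeFactors q, Real.log ((p:ℕ):ℝ) / ((p : ℝ) - 1) with hS
  set j := q*m+a with hjdef
  set P1 : ℝ := |poch (-(j : ℝ) / q - (q : ℝ) * n) (q * n)| with hP1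
  set P2 : ℝ := |poch (-(j : ℝ) / q + (r : ℝ) * n + 1) (q * n)| with hP2
  set F : ℝ := ((Nat.factorial (q * n) : ℕ) : ℝ) with hF
  have hFpos : (0:ℝ) < F := by
    rw [hF]; exact_mod_cast (q*n).factorial_pos
  -- rewrite |Cnj| as a product of absolute values
  have habs : |Cnj k q r n j| =
      ((r * q * n).choose j : ℝ) * |(r * q * n : ℝ) - 2 * j| ^ (1 - k % 2) *
        (q : ℝ) ^ (2 * k * q * n) *
        (∏ p ∈ Nat.primeFactors q, (p : ℝ) ^ (2 * k * q * n / (p - 1))) *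
        (P1 ^ k * P2 ^ k / F ^ (2 * k)) := by
    rw [Cnj, abs_div, hP1, hP2, hF]
    simp only [abs_mul, abs_pow, abs_neg, abs_one, one_pow, one_mul, Nat.abs_cast,
      Finset.abs_prod]
    ring
  -- individual bounds
  have b2 : ((r*q*n).choose j : ℝ) ≤ 2^(r*q*n) := by
    exact_mod_cast choose_le_two_pow' (r*q*n) j
  have b3 : |(r * q * n : ℝ) - 2 * j| ^ (1 - k % 2) ≤ ((r*q*n+1 : ℕ):ℝ) := by
    have hjr : (j:ℝ) ≤ ((r*q*n:ℕ):ℝ) := by exact_mod_cast hj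
    have hj0 : (0:ℝ) ≤ (j:ℝ) := by positivity
    have habs2 : |(r * q * n : ℝ) - 2 * j| ≤ ((r*q*n+1:ℕ):ℝ) := by
      rw [abs_le]
      push_cast at hjr ⊢
      constructor <;> nlinarith
    have hone : (1:ℝ) ≤ ((r*q*n+1:ℕ):ℝ) := by exact_mod_cast Nat.le_add_left 1 (r*q*n)
    calc |(r * q * n : ℝ) - 2 * j| ^ (1 - k % 2)
        ≤ ((r*q*n+1:ℕ):ℝ) ^ (1 - k % 2) := pow_le_pow_left₀ (abs_nonneg _) habs2 _
      _ ≤ ((r*q*n+1:ℕ):ℝ) ^ 1 := pow_le_pow_right₀ hone (by omega)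
      _ = ((r*q*n+1:ℕ):ℝ) := pow_one _
  have b5 : (∏ p ∈ Nat.primeFactors q, (p : ℝ) ^ (2 * k * q * n / (p - 1)))
      ≤ Real.exp (((2*k*q*n : ℕ):ℝ) * S) := by
    calc (∏ p ∈ Nat.primeFactors q, (p : ℝ) ^ (2 * k * q * n / (p - 1)))
        ≤ ∏ p ∈ Nat.primeFactors q,
            Real.exp (((2*k*q*n : ℕ):ℝ) * (Real.log ((p:ℕ):ℝ) / ((p:ℝ) - 1))) := by
          refine Finset.prod_le_prod (fun p _ => by positivity) (fun p hp => ?_)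
          have hp2 : 2 ≤ p := (Nat.prime_of_mem_primeFactors hp).two_le
          have hp0 : (0:ℝ) < (p:ℝ) := by
            have : (0:ℕ) < p := by omega
            exact_mod_cast this
          have hlogp : 0 ≤ Real.log ((p:ℕ):ℝ) := by
            apply Real.log_nonneg
            exact_mod_cast Nat.one_le_of_lt hp2
          have hps : ((p-1:ℕ):ℝ) = (p:ℝ) - 1 := by
            rw [Nat.cast_sub (by omega)]; simp
          have hexp : (p:ℝ) ^ (2 * k * q * n / (p - 1))
              = Real.exp (((2*k*q*n/(p-1) : ℕ):ℝ) * Real.log ((p:ℕ):ℝ)) := by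
            rw [Real.exp_nat_mul, Real.exp_log hp0]
          rw [hexp, Real.exp_le_exp]
          have hcd : ((2*k*q*n/(p-1) : ℕ):ℝ) ≤ ((2*k*q*n : ℕ):ℝ) / ((p-1 : ℕ):ℝ) :=
            Nat.cast_div_le
          rw [hps] at hcd
          calc ((2*k*q*n/(p-1) : ℕ):ℝ) * Real.log ((p:ℕ):ℝ)
              ≤ (((2*k*q*n : ℕ):ℝ) / ((p:ℝ) - 1)) * Real.log ((p:ℕ):ℝ) :=
                mul_le_mul_of_nonneg_right hcd hlogp
            _ = ((2*k*q*n : ℕ):ℝ) * (Real.log ((p:ℕ):ℝ) / ((p:ℝ) - 1)) := by ring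
      _ = Real.exp (((2*k*q*n : ℕ):ℝ) * S) := by
          rw [← Real.exp_sum, hS, Finset.mul_sum]
  have hCC : ((q*n+m+1).choose (q*n) : ℝ) * (((r*n-m)+q*n).choose (q*n) : ℝ)
      ≤ ((((2*q+r)*n+1).choose (2*q*n)) : ℝ) := by
    have hrnm : m + (r*n - m) = r*n := by omega
    have hsum : (q*n+m+1) + ((r*n-m)+q*n) = (2*q+r)*n+1 := by
      have hE : (2*q+r)*n = 2*(q*n) + r*n := by ring
      omega
    have h2 : q*n + q*n = 2*q*n := by ring
    have := choose_mul_choose_le' (q*n+m+1) ((r*n-m)+q*n) (q*n) (q*n)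
    rw [hsum, h2] at this
    exact_mod_cast this
  have b67 : P1 ^ k * P2 ^ k / F ^ (2 * k)
      ≤ ((((2*q+r)*n+1).choose (2*q*n)) : ℝ) ^ k := by
    rw [div_le_iff₀ (by positivity)]
    have hp1 : P1 ≤ F * ((q*n+m+1).choose (q*n) : ℝ) := abs_poch1_le q n m a hq ha
    have hp2 : P2 ≤ F * (((r*n-m)+q*n).choose (q*n) : ℝ) := abs_poch2_le q r n m a hq ha hm
    calc P1 ^ k * P2 ^ k
        ≤ (F * ((q*n+m+1).choose (q*n) : ℝ)) ^ k
            * (F * (((r*n-m)+q*n).choose (q*n) : ℝ)) ^ k := by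
          exact mul_le_mul (pow_le_pow_left₀ (abs_nonneg _) hp1 k)
            (pow_le_pow_left₀ (abs_nonneg _) hp2 k) (by positivity) (by positivity)
      _ = (((q*n+m+1).choose (q*n) : ℝ) * (((r*n-m)+q*n).choose (q*n) : ℝ)) ^ k
            * F ^ (2*k) := by ring
      _ ≤ ((((2*q+r)*n+1).choose (2*q*n)) : ℝ) ^ k * F ^ (2*k) := by
          exact mul_le_mul_of_nonneg_right (pow_le_pow_left₀ (by positivity) hCC k)
            (by positivity)
  -- assemble
  rw [habs]
  have hqpow : (q : ℝ) ^ (2 * k * q * n) = ((q:ℝ) ^ (2*q*n)) ^ k := by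
    rw [← pow_mul]; congr 1; ring
  calc ((r * q * n).choose j : ℝ) * |(r * q * n : ℝ) - 2 * j| ^ (1 - k % 2) *
        (q : ℝ) ^ (2 * k * q * n) *
        (∏ p ∈ Nat.primeFactors q, (p : ℝ) ^ (2 * k * q * n / (p - 1))) *
        (P1 ^ k * P2 ^ k / F ^ (2 * k))
      ≤ (2^(r*q*n) : ℝ) * ((r*q*n+1 : ℕ):ℝ) * (q : ℝ) ^ (2 * k * q * n) *
        Real.exp (((2*k*q*n : ℕ):ℝ) * S) *
        ((((2*q+r)*n+1).choose (2*q*n) : ℝ)) ^ k := by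
        gcongr
        all_goals first | exact b2 | exact b3 | exact b5 | exact b67 | positivity
    _ = (2^(r*q*n) : ℝ) * ((r*q*n+1 : ℕ):ℝ) * Real.exp (((2*k*q*n : ℕ):ℝ) * S) *
        (((q:ℝ) ^ (2*q*n)) * (((2*q+r)*n+1).choose (2*q*n) : ℝ)) ^ k := by
        rw [hqpow, mul_pow]; ring
    _ ≤ (2^(r*q*n) : ℝ) * ((r*q*n+1 : ℕ):ℝ) * Real.exp (((2*k*q*n : ℕ):ℝ) * S) *
        (Real.exp 1 * (((2*q+r)*n+1 : ℕ):ℝ) * Real.exp ((n:ℝ) * Wc q r)) ^ k := by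
        exact mul_le_mul_of_nonneg_left
          (pow_le_pow_left₀ (by positivity) (key_bound q r n hq hr hn) k) (by positivity)
    _ = ((r*q*n+1 : ℕ):ℝ) * (Real.exp 1 * (((2*q+r)*n+1 : ℕ):ℝ))^k
        * Real.exp (betaConst k q r * n) := by
        rw [mul_pow (Real.exp 1 * (((2*q+r)*n+1 : ℕ):ℝ)) (Real.exp ((n:ℝ) * Wc q r)),
          ← Real.exp_nat_mul]
        have hexp2 : (2:ℝ)^(r*q*n) * Real.exp (((2*k*q*n : ℕ):ℝ) * S)
            * Real.exp ((k:ℝ) * ((n:ℝ) * Wc q r)) = Real.exp (betaConst k q r * n) := by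
          rw [show (2:ℝ)^(r*q*n) = Real.exp (((r*q*n:ℕ):ℝ) * Real.log 2) by
            rw [Real.exp_nat_mul, Real.exp_log two_pos],
            ← Real.exp_add, ← Real.exp_add]
          congr 1
          rw [betaConst, Wc, hS]
          push_cast
          ring
        rw [← hexp2]
        ring

lemma poly_le_exp_eventually (C : ℝ) (hC : 0 < C) (d : ℕ) (ε : ℝ) (hε : 0 < ε) :
    ∃ N : ℕ, ∀ n : ℕ, N ≤ n → C * ((n:ℝ)+1)^d ≤ Real.exp (ε * n) := by
  set c : ℝ := 2*((d:ℝ)+1)/ε with hcdef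
  have hc : 0 < c := by positivity
  obtain ⟨N, hN⟩ := exists_nat_ge ((2/ε)*(Real.log C + (d:ℝ)*Real.log c + ε/2))
  refine ⟨N, fun n hn => ?_⟩
  have hx : (0:ℝ) < C*((n:ℝ)+1)^d := by positivity
  rw [show C*((n:ℝ)+1)^d = Real.exp (Real.log (C*((n:ℝ)+1)^d)) from (Real.exp_log hx).symm,
    Real.exp_le_exp, Real.log_mul (ne_of_gt hC) (by positivity), Real.log_pow]
  have hlog : Real.log ((n:ℝ)+1) ≤ ((n:ℝ)+1)/c - 1 + Real.log c := by
    have h1 := Real.log_le_sub_one_of_pos (x := ((n:ℝ)+1)/c) (by positivity)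
    have h2 : Real.log (((n:ℝ)+1)/c) = Real.log ((n:ℝ)+1) - Real.log c :=
      Real.log_div (by positivity) (ne_of_gt hc)
    linarith
  have hdc : (d:ℝ)/c ≤ ε/2 := by
    rw [hcdef, div_div_eq_mul_div, div_le_div_iff₀ (by positivity) (by positivity)]
    nlinarith [Nat.cast_nonneg (α := ℝ) d]
  have hd0 : (0:ℝ) ≤ (d:ℝ) := Nat.cast_nonneg d
  have h1 : (d:ℝ)*Real.log ((n:ℝ)+1) ≤ (ε/2)*((n:ℝ)+1) + (d:ℝ)*Real.log c - d := by
    have h3 := mul_le_mul_of_nonneg_left hlog hd0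
    have h4 : ((d:ℝ)/c)*((n:ℝ)+1) ≤ (ε/2)*((n:ℝ)+1) :=
      mul_le_mul_of_nonneg_right hdc (by positivity)
    have h6 : (d:ℝ)*(((n:ℝ)+1)/c) = ((d:ℝ)/c)*((n:ℝ)+1) := by ring
    nlinarith [h6]
  have h5 : Real.log C + (d:ℝ)*Real.log c + ε/2 ≤ (ε/2)*(n:ℝ) := by
    have hNn : (2/ε)*(Real.log C + (d:ℝ)*Real.log c + ε/2) ≤ (n:ℝ) :=
      le_trans hN (by exact_mod_cast hn)
    have := mul_le_mul_of_nonneg_left hNn (le_of_lt (half_pos hε))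
    have heq : (ε/2)*((2/ε)*(Real.log C + (d:ℝ)*Real.log c + ε/2))
        = Real.log C + (d:ℝ)*Real.log c + ε/2 := by field_simp
    linarith [heq ▸ this]
  linarith

lemma abs_sum_le_card_mul {ι : Type*} (s : Finset ι) (f : ι → ℝ) (B : ℝ)
    (h : ∀ i ∈ s, |f i| ≤ B) : |∑ i ∈ s, f i| ≤ (s.card : ℝ) * B := by
  calc |∑ i ∈ s, f i| ≤ ∑ i ∈ s, |f i| := Finset.abs_sum_le_sum_abs f s
    _ ≤ s.card • B := Finset.sum_le_card_nsmul s _ B h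
    _ = (s.card : ℝ) * B := nsmul_eq_mul _ _


theorem stmt_4 (k q r : ℕ) (hk : 2 ≤ k) (hq : 3 ≤ q) (hr : 2 * k < r) :
    ∀ ε : ℝ, 0 < ε → ∃ N : ℕ, ∀ n : ℕ, N ≤ n → 0 < n → Nat.factorial q ∣ n →
      |rho0 k q r n| ≤ Real.exp ((betaConst k q r + ε) * n) ∧
      |rho1 k q r n| ≤ Real.exp ((betaConst k q r + ε) * n) ∧
      ∀ a : ℕ, 1 ≤ a → 2 * a < q →
        |rhoA k q r n a| ≤ Real.exp ((betaConst k q r + ε) * n) := by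
  intro ε hε
  have hq1 : 1 ≤ q := by omega
  have hr1 : 1 ≤ r := by omega
  have hq0 : (0:ℝ) < (q:ℝ) := by exact_mod_cast hq1
  have hqR : (1:ℝ) ≤ (q:ℝ) := by exact_mod_cast hq1
  have hrR : (1:ℝ) ≤ (r:ℝ) := by exact_mod_cast hr1
  set C₁ : ℝ := ((q:ℝ)^(k+1) * 2^(k+1)) * ((r:ℝ)+1)^2 * ((r:ℝ)*q+1)
      * (Real.exp 1 * (2*(q:ℝ)+(r:ℝ)+1))^k with hC1def
  have hC1pos : 0 < C₁ := by positivity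
  obtain ⟨N, hN⟩ := poly_le_exp_eventually C₁ hC1pos (k+3) ε hε
  refine ⟨N, fun n hNn hn _ => ?_⟩
  have hn1 : 1 ≤ n := hn
  have hnR : (1:ℝ) ≤ (n:ℝ) := by exact_mod_cast hn1
  set CB : ℝ := ((r*q*n+1 : ℕ):ℝ) * (Real.exp 1 * (((2*q+r)*n+1 : ℕ):ℝ))^k
      * Real.exp (betaConst k q r * n) with hCBdef
  have hCB0 : (0:ℝ) ≤ CB := by positivity
  -- small analytic facts
  have hx1 : (1:ℝ) ≤ ((r:ℝ)*(n:ℝ)) := by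
    calc (1:ℝ) = 1*1 := by ring
      _ ≤ ((r:ℝ)*(n:ℝ)) := mul_le_mul hrR hnR zero_le_one (by linarith)
  have hx0 : (0:ℝ) ≤ ((r:ℝ)*(n:ℝ)) := by linarith
  have hqk1 : (1:ℝ) ≤ (q:ℝ)^(k+1) := one_le_pow₀ hqR
  have h2k : (1:ℝ) ≤ (2:ℝ)^k := one_le_pow₀ one_le_two
  have h2kk : (2:ℝ)^(k+1) = 2*2^k := by ring
  have h2k1 : (2:ℝ) ≤ 2^(k+1) := by rw [h2kk]; linarith
  have hsq : (((r:ℝ)*(n:ℝ))+1)^2 = ((r:ℝ)*(n:ℝ))*((r:ℝ)*(n:ℝ)) + 2*((r:ℝ)*(n:ℝ)) + 1 := by ring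
  have hxx : ((r:ℝ)*(n:ℝ))*((r:ℝ)*(n:ℝ)) ≤ (((r:ℝ)*(n:ℝ))+1)^2 := by rw [hsq]; linarith
  have hxle : ((r:ℝ)*(n:ℝ)) ≤ ((r:ℝ)*(n:ℝ))*((r:ℝ)*(n:ℝ)) := le_mul_of_one_le_right hx0 hx1
  have hx11 : ((r:ℝ)*(n:ℝ))+1 ≤ (((r:ℝ)*(n:ℝ))+1)^2 := by rw [hsq]; linarith
  have hcoef0 : ((r:ℝ)*(n:ℝ))*((r:ℝ)*(n:ℝ)) + (q:ℝ)*(((r:ℝ)*(n:ℝ))*(((r:ℝ)*(n:ℝ))*(q:ℝ)^k))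
      ≤ (q:ℝ)^(k+1)*2^(k+1)*(((r:ℝ)*(n:ℝ))+1)^2 := by
    have hq' : (q:ℝ)*(q:ℝ)^k = (q:ℝ)^(k+1) := by rw [pow_succ]; ring
    calc ((r:ℝ)*(n:ℝ))*((r:ℝ)*(n:ℝ)) + (q:ℝ)*(((r:ℝ)*(n:ℝ))*(((r:ℝ)*(n:ℝ))*(q:ℝ)^k))
        = (1 + (q:ℝ)^(k+1)) * (((r:ℝ)*(n:ℝ))*((r:ℝ)*(n:ℝ))) := by rw [← hq']; ring
      _ ≤ (1 + (q:ℝ)^(k+1)) * (((r:ℝ)*(n:ℝ))+1)^2 :=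
          mul_le_mul_of_nonneg_left hxx (by positivity)
      _ ≤ ((q:ℝ)^(k+1)*2^(k+1)) * (((r:ℝ)*(n:ℝ))+1)^2 := by
          refine mul_le_mul_of_nonneg_right ?_ (by positivity)
          have h9 : (q:ℝ)^(k+1)*2 ≤ (q:ℝ)^(k+1)*2^(k+1) :=
            mul_le_mul_of_nonneg_left h2k1 (by positivity)
          linarith
      _ = (q:ℝ)^(k+1)*2^(k+1)*(((r:ℝ)*(n:ℝ))+1)^2 := by ring
  have hcoef1 : (((r:ℝ)*(n:ℝ))+1) + 2^k*((r:ℝ)*(n:ℝ)) ≤ (q:ℝ)^(k+1)*2^(k+1)*(((r:ℝ)*(n:ℝ))+1)^2 := by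
    calc (((r:ℝ)*(n:ℝ))+1) + 2^k*((r:ℝ)*(n:ℝ)) ≤ (1+2^k)*(((r:ℝ)*(n:ℝ))+1) := by
          have h9 : (1+(2:ℝ)^k)*(((r:ℝ)*(n:ℝ))+1) = (((r:ℝ)*(n:ℝ))+1) + 2^k*((r:ℝ)*(n:ℝ)) + 2^k := by ring
          rw [h9]; linarith
      _ ≤ 2^(k+1)*(((r:ℝ)*(n:ℝ))+1) := by
          refine mul_le_mul_of_nonneg_right ?_ (by linarith)
          rw [h2kk]; linarith
      _ ≤ 2^(k+1)*(((r:ℝ)*(n:ℝ))+1)^2 := mul_le_mul_of_nonneg_left hx11 (by positivity)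
      _ ≤ (q:ℝ)^(k+1)*2^(k+1)*(((r:ℝ)*(n:ℝ))+1)^2 := by
          have h8 : (2:ℝ)^(k+1)*(((r:ℝ)*(n:ℝ))+1)^2 ≤ (q:ℝ)^(k+1)*(2^(k+1)*(((r:ℝ)*(n:ℝ))+1)^2) :=
            le_mul_of_one_le_left (by positivity) hqk1
          calc (2:ℝ)^(k+1)*(((r:ℝ)*(n:ℝ))+1)^2 ≤ (q:ℝ)^(k+1)*(2^(k+1)*(((r:ℝ)*(n:ℝ))+1)^2) := h8
            _ = (q:ℝ)^(k+1)*2^(k+1)*(((r:ℝ)*(n:ℝ))+1)^2 := by ring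
  have hcoefA : ((r:ℝ)*(n:ℝ)) ≤ (q:ℝ)^(k+1)*2^(k+1)*(((r:ℝ)*(n:ℝ))+1)^2 := by
    refine le_trans ?_ hcoef1
    have h9 : (0:ℝ) ≤ (2:ℝ)^k*((r:ℝ)*(n:ℝ)) := mul_nonneg (by positivity) hx0
    linarith
  -- envelope bound
  have hEnv : ((q:ℝ)^(k+1) * 2^(k+1)) * (((r:ℝ)*(n:ℝ))+1)^2 * CB
      ≤ Real.exp ((betaConst k q r + ε) * n) := by
    have hpoly := hN n hNn
    have hstep : ((q:ℝ)^(k+1)*2^(k+1)) * (((r:ℝ)*(n:ℝ))+1)^2 * CB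
        ≤ C₁ * ((n:ℝ)+1)^(k+3) * Real.exp (betaConst k q r * n) := by
      have e1 : (((r:ℝ)*(n:ℝ))+1)^2 ≤ (((r:ℝ)+1)*((n:ℝ)+1))^2 := by
        refine pow_le_pow_left₀ (by positivity) ?_ 2
        have h9 : ((r:ℝ)+1)*((n:ℝ)+1) = ((r:ℝ)*(n:ℝ)) + (r:ℝ) + (n:ℝ) + 1 := by ring
        rw [h9]; linarith
      have e2 : ((r*q*n+1 : ℕ):ℝ) ≤ ((r:ℝ)*q+1)*((n:ℝ)+1) := by
        have h9 : ((r:ℝ)*q+1)*((n:ℝ)+1) = (r:ℝ)*(q:ℝ)*(n:ℝ) + (r:ℝ)*q + (n:ℝ) + 1 := by ring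
        have h10 : (0:ℝ) ≤ (r:ℝ)*q := by positivity
        push_cast
        rw [h9]; linarith
      have e3 : (Real.exp 1 * (((2*q+r)*n+1 : ℕ):ℝ))^k
          ≤ (Real.exp 1 * (2*(q:ℝ)+(r:ℝ)+1))^k * ((n:ℝ)+1)^k := by
        rw [← mul_pow]
        refine pow_le_pow_left₀ (by positivity) ?_ k
        have he1 : (0:ℝ) < Real.exp 1 := Real.exp_pos 1
        have h7 : (((2*q+r)*n+1 : ℕ):ℝ) ≤ (2*(q:ℝ)+(r:ℝ)+1)*((n:ℝ)+1) := by
          have h9 : (2*(q:ℝ)+(r:ℝ)+1)*((n:ℝ)+1)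
              = (2*(q:ℝ)+(r:ℝ))*(n:ℝ) + 2*(q:ℝ)+(r:ℝ) + (n:ℝ) + 1 := by ring
          have h10 : (0:ℝ) ≤ 2*(q:ℝ)+(r:ℝ) := by positivity
          push_cast
          rw [h9]; linarith
        calc Real.exp 1 * (((2*q+r)*n+1 : ℕ):ℝ)
            ≤ Real.exp 1 * ((2*(q:ℝ)+(r:ℝ)+1)*((n:ℝ)+1)) :=
              mul_le_mul_of_nonneg_left h7 he1.le
          _ = Real.exp 1 * (2*(q:ℝ)+(r:ℝ)+1) * ((n:ℝ)+1) := by ring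
      calc ((q:ℝ)^(k+1)*2^(k+1)) * (((r:ℝ)*(n:ℝ))+1)^2 * CB
          = ((q:ℝ)^(k+1)*2^(k+1)) * ((((r:ℝ)*(n:ℝ))+1)^2 * (((r*q*n+1 : ℕ):ℝ)
              * (Real.exp 1 * (((2*q+r)*n+1 : ℕ):ℝ))^k)) * Real.exp (betaConst k q r * n) := by
            rw [hCBdef]; ring
        _ ≤ ((q:ℝ)^(k+1)*2^(k+1)) * ((((r:ℝ)+1)*((n:ℝ)+1))^2 * ((((r:ℝ)*q+1)*((n:ℝ)+1))
              * ((Real.exp 1 * (2*(q:ℝ)+(r:ℝ)+1))^k * ((n:ℝ)+1)^k)))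
              * Real.exp (betaConst k q r * n) := by
            refine mul_le_mul_of_nonneg_right (mul_le_mul_of_nonneg_left ?_ (by positivity))
              (by positivity)
            refine mul_le_mul e1 (mul_le_mul e2 e3 (by positivity) (by positivity))
              (by positivity) (by positivity)
        _ = C₁ * ((n:ℝ)+1)^(k+3) * Real.exp (betaConst k q r * n) := by
            rw [hC1def]; ring
    calc ((q:ℝ)^(k+1)*2^(k+1)) * (((r:ℝ)*(n:ℝ))+1)^2 * CB
        ≤ C₁ * ((n:ℝ)+1)^(k+3) * Real.exp (betaConst k q r * n) := hstep
      _ ≤ Real.exp (ε * n) * Real.exp (betaConst k q r * n) :=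
          mul_le_mul_of_nonneg_right hpoly (Real.exp_pos _).le
      _ = Real.exp ((betaConst k q r + ε) * n) := by
          rw [← Real.exp_add]; congr 1; ring
  -- Cnj bounds
  have hC0 : ∀ j : ℕ, j ≤ r*n → |Cnj k q r n (q*j)| ≤ CB := by
    intro j hj
    have h4 : q*(r*n) = r*q*n := by ring
    have h5 : q*j ≤ q*(r*n) := Nat.mul_le_mul_left q hj
    have h3 : q*j+0 ≤ r*q*n := by omega
    simpa [hCBdef] using cnj_le k q r n hq1 hr1 hn1 j 0 hj (by omega) h3
  have hCa : ∀ j a : ℕ, j < r*n → a < q → |Cnj k q r n (q*j+a)| ≤ CB := by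
    intro j a hj ha
    have h1 : q*j + q ≤ q*(r*n) := by
      have := Nat.mul_le_mul_left q (Nat.succ_le_of_lt hj)
      rwa [Nat.mul_succ] at this
    have h4 : q*(r*n) = r*q*n := by ring
    exact cnj_le k q r n hq1 hr1 hn1 j a (by omega) ha (by omega)
  have hsc : ∀ kk : ℕ, |((-1:ℝ))^kk/(q:ℝ)| ≤ 1 := by
    intro kk
    rw [abs_div, abs_pow, abs_neg, abs_one, one_pow, abs_of_pos hq0, div_le_one hq0]
    exact hqR
  -- rhoA bound
  have hrhoA : ∀ a : ℕ, a < q → |rhoA k q r n a| ≤ ((r:ℝ)*(n:ℝ)) * CB := by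
    intro a haq
    rw [rhoA, abs_mul]
    have h1 : |∑ j ∈ Finset.range (r*n), Cnj k q r n (q*j+a)| ≤ ((r*n : ℕ):ℝ) * CB := by
      have := abs_sum_le_card_mul (Finset.range (r*n)) (fun j => Cnj k q r n (q*j+a)) CB
        (fun j hj => hCa j a (Finset.mem_range.1 hj) haq)
      simpa using this
    calc |(-1:ℝ)^(k-1)/(q:ℝ)| * |∑ j ∈ Finset.range (r*n), Cnj k q r n (q*j+a)|
        ≤ 1 * (((r*n : ℕ):ℝ) * CB) :=
          mul_le_mul (hsc (k-1)) h1 (abs_nonneg _) zero_le_one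
      _ = ((r:ℝ)*(n:ℝ)) * CB := by push_cast; ring
  -- rho1 bound
  have hrho1 : |rho1 k q r n| ≤ ((((r:ℝ)*(n:ℝ))+1) + 2^k * ((r:ℝ)*(n:ℝ))) * CB := by
    rw [rho1]
    have h1 : |((-1:ℝ))^(k-1)/(q:ℝ) * (∑ j ∈ Finset.range (r*n+1), Cnj k q r n (q*j))|
        ≤ (((r:ℝ)*(n:ℝ))+1) * CB := by
      rw [abs_mul]
      have h2 : |∑ j ∈ Finset.range (r*n+1), Cnj k q r n (q*j)| ≤ ((r*n+1 : ℕ):ℝ) * CB := by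
        have := abs_sum_le_card_mul (Finset.range (r*n+1)) (fun j => Cnj k q r n (q*j)) CB
          (fun j hj => hC0 j (by have := Finset.mem_range.1 hj; omega))
        simpa using this
      calc |((-1:ℝ))^(k-1)/(q:ℝ)| * |∑ j ∈ Finset.range (r*n+1), Cnj k q r n (q*j)|
          ≤ 1 * (((r*n+1 : ℕ):ℝ) * CB) :=
            mul_le_mul (hsc (k-1)) h2 (abs_nonneg _) zero_le_one
        _ = (((r:ℝ)*(n:ℝ))+1) * CB := by push_cast; ring
    have h3 : |(if Even q then (1:ℝ) else 0) * (2 ^ k - 1) * rhoA k q r n (q / 2)|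
        ≤ 2^k * (((r:ℝ)*(n:ℝ)) * CB) := by
      rw [abs_mul, abs_mul]
      have hif : |(if Even q then (1:ℝ) else 0)| ≤ 1 := by
        split_ifs <;> simp
      have h2kabs : |(2:ℝ)^k - 1| ≤ 2^k := by
        rw [abs_of_nonneg (by linarith)]
        linarith
      have hA := hrhoA (q/2) (Nat.div_lt_self (by omega) one_lt_two)
      calc |(if Even q then (1:ℝ) else 0)| * |(2:ℝ)^k - 1| * |rhoA k q r n (q/2)|
          ≤ 1 * (2:ℝ)^k * (((r:ℝ)*(n:ℝ)) * CB) := by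
            exact mul_le_mul (mul_le_mul hif h2kabs (abs_nonneg _) zero_le_one) hA
              (abs_nonneg _) (by positivity)
        _ = 2^k * (((r:ℝ)*(n:ℝ)) * CB) := by ring
    calc |_ + _| ≤ _ := abs_add_le _ _
      _ ≤ (((r:ℝ)*(n:ℝ))+1) * CB + 2^k * (((r:ℝ)*(n:ℝ)) * CB) := add_le_add h1 h3
      _ = ((((r:ℝ)*(n:ℝ))+1) + 2^k * ((r:ℝ)*(n:ℝ))) * CB := by ring
  -- rho0 bound
  have hrho0 : |rho0 k q r n| ≤
      (((r:ℝ)*(n:ℝ))*((r:ℝ)*(n:ℝ)) + (q:ℝ)*(((r:ℝ)*(n:ℝ))*(((r:ℝ)*(n:ℝ))*(q:ℝ)^k))) * CB := by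
    rw [rho0, abs_mul]
    have hsum1 : |∑ j ∈ Finset.Icc 1 (r*n), ∑ m ∈ Finset.Icc 1 j, Cnj k q r n (q*j) / (m:ℝ)^k|
        ≤ ((r:ℝ)*(n:ℝ)) * (((r:ℝ)*(n:ℝ)) * CB) := by
      have hinner : ∀ j ∈ Finset.Icc 1 (r*n),
          |∑ m ∈ Finset.Icc 1 j, Cnj k q r n (q*j) / (m:ℝ)^k| ≤ ((r:ℝ)*(n:ℝ)) * CB := by
        intro j hj
        obtain ⟨hj1, hj2⟩ := Finset.mem_Icc.1 hj
        have hterm : ∀ m ∈ Finset.Icc 1 j, |Cnj k q r n (q*j) / (m:ℝ)^k| ≤ CB := by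
          intro m hm
          obtain ⟨hm1, _⟩ := Finset.mem_Icc.1 hm
          have hm1R : (1:ℝ) ≤ (m:ℝ) := by exact_mod_cast hm1
          rw [abs_div, abs_pow, abs_of_nonneg (by positivity : (0:ℝ) ≤ (m:ℝ))]
          calc |Cnj k q r n (q*j)| / (m:ℝ)^k ≤ |Cnj k q r n (q*j)| :=
                div_le_self (abs_nonneg _) (one_le_pow₀ hm1R)
            _ ≤ CB := hC0 j hj2
        have h11 := abs_sum_le_card_mul (Finset.Icc 1 j)
          (fun m => Cnj k q r n (q*j) / (m:ℝ)^k) CB hterm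
        rw [Nat.card_Icc] at h11
        calc |∑ m ∈ Finset.Icc 1 j, Cnj k q r n (q*j) / (m:ℝ)^k|
            ≤ ((j+1-1 : ℕ):ℝ) * CB := h11
          _ ≤ ((r:ℝ)*(n:ℝ)) * CB := by
              refine mul_le_mul_of_nonneg_right ?_ hCB0
              have h12 : (j : ℝ) ≤ ((r:ℝ)*(n:ℝ)) := by exact_mod_cast hj2
              simpa using h12
      have h13 := abs_sum_le_card_mul (Finset.Icc 1 (r*n))
        (fun j => ∑ m ∈ Finset.Icc 1 j, Cnj k q r n (q*j) / (m:ℝ)^k)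
        (((r:ℝ)*(n:ℝ)) * CB) hinner
      rw [Nat.card_Icc] at h13
      calc |∑ j ∈ Finset.Icc 1 (r*n), ∑ m ∈ Finset.Icc 1 j, Cnj k q r n (q*j) / (m:ℝ)^k|
          ≤ ((r*n+1-1 : ℕ):ℝ) * (((r:ℝ)*(n:ℝ)) * CB) := h13
        _ ≤ ((r:ℝ)*(n:ℝ)) * (((r:ℝ)*(n:ℝ)) * CB) := by
            refine mul_le_mul_of_nonneg_right ?_ (by positivity)
            simp
    have hsum2 : |∑ a ∈ Finset.Icc 1 (q-1), ∑ j ∈ Finset.range (r*n), ∑ m ∈ Finset.range (j+1),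
          Cnj k q r n (q*j+a) / ((m:ℝ) + (a:ℝ)/q)^k|
        ≤ (q:ℝ) * (((r:ℝ)*(n:ℝ)) * (((r:ℝ)*(n:ℝ)) * ((q:ℝ)^k * CB))) := by
      have houter : ∀ a ∈ Finset.Icc 1 (q-1),
          |∑ j ∈ Finset.range (r*n), ∑ m ∈ Finset.range (j+1),
            Cnj k q r n (q*j+a) / ((m:ℝ) + (a:ℝ)/q)^k|
          ≤ ((r:ℝ)*(n:ℝ)) * (((r:ℝ)*(n:ℝ)) * ((q:ℝ)^k * CB)) := by
        intro a haIcc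
        obtain ⟨ha1, ha2⟩ := Finset.mem_Icc.1 haIcc
        have haq : a < q := by omega
        have hmid : ∀ j ∈ Finset.range (r*n),
            |∑ m ∈ Finset.range (j+1), Cnj k q r n (q*j+a) / ((m:ℝ) + (a:ℝ)/q)^k|
            ≤ ((r:ℝ)*(n:ℝ)) * ((q:ℝ)^k * CB) := by
          intro j hj
          have hjlt := Finset.mem_range.1 hj
          have hterm : ∀ m ∈ Finset.range (j+1),
              |Cnj k q r n (q*j+a) / ((m:ℝ) + (a:ℝ)/q)^k| ≤ (q:ℝ)^k * CB := by
            intro m _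
            have haR : (1:ℝ) ≤ (a:ℝ) := by exact_mod_cast ha1
            have hden : ((1:ℝ)/q)^k ≤ ((m:ℝ) + (a:ℝ)/q)^k := by
              refine pow_le_pow_left₀ (by positivity) ?_ k
              have h5 : (1:ℝ)/q ≤ (a:ℝ)/q := by gcongr
              have h6 : (0:ℝ) ≤ (m:ℝ) := by positivity
              linarith
            rw [abs_div, abs_of_nonneg (by positivity : (0:ℝ) ≤ ((m:ℝ) + (a:ℝ)/q)^k)]
            calc |Cnj k q r n (q*j+a)| / ((m:ℝ) + (a:ℝ)/q)^k
                ≤ |Cnj k q r n (q*j+a)| / ((1:ℝ)/q)^k :=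
                  div_le_div_of_nonneg_left (abs_nonneg _) (by positivity) hden
              _ = |Cnj k q r n (q*j+a)| * (q:ℝ)^k := by
                  rw [div_pow, one_pow, div_div_eq_mul_div, div_one]
              _ ≤ CB * (q:ℝ)^k :=
                  mul_le_mul_of_nonneg_right (hCa j a hjlt haq) (by positivity)
              _ = (q:ℝ)^k * CB := by ring
          have h14 := abs_sum_le_card_mul (Finset.range (j+1))
            (fun m => Cnj k q r n (q*j+a) / ((m:ℝ) + (a:ℝ)/q)^k) ((q:ℝ)^k * CB) hterm
          rw [Finset.card_range] at h14
          calc |∑ m ∈ Finset.range (j+1), Cnj k q r n (q*j+a) / ((m:ℝ) + (a:ℝ)/q)^k|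
              ≤ ((j+1 : ℕ):ℝ) * ((q:ℝ)^k * CB) := h14
            _ ≤ ((r:ℝ)*(n:ℝ)) * ((q:ℝ)^k * CB) := by
                refine mul_le_mul_of_nonneg_right ?_ (by positivity)
                have h15 : ((j+1 : ℕ):ℝ) ≤ ((r*n : ℕ):ℝ) := by exact_mod_cast hjlt
                push_cast at h15 ⊢
                linarith
        have h16 := abs_sum_le_card_mul (Finset.range (r*n))
          (fun j => ∑ m ∈ Finset.range (j+1), Cnj k q r n (q*j+a) / ((m:ℝ) + (a:ℝ)/q)^k)
          (((r:ℝ)*(n:ℝ)) * ((q:ℝ)^k * CB)) hmid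
        rw [Finset.card_range] at h16
        calc |∑ j ∈ Finset.range (r*n), ∑ m ∈ Finset.range (j+1),
              Cnj k q r n (q*j+a) / ((m:ℝ) + (a:ℝ)/q)^k|
            ≤ ((r*n : ℕ):ℝ) * (((r:ℝ)*(n:ℝ)) * ((q:ℝ)^k * CB)) := h16
          _ = ((r:ℝ)*(n:ℝ)) * (((r:ℝ)*(n:ℝ)) * ((q:ℝ)^k * CB)) := by push_cast; ring
      have h17 := abs_sum_le_card_mul (Finset.Icc 1 (q-1))
        (fun a => ∑ j ∈ Finset.range (r*n), ∑ m ∈ Finset.range (j+1),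
          Cnj k q r n (q*j+a) / ((m:ℝ) + (a:ℝ)/q)^k)
        (((r:ℝ)*(n:ℝ)) * (((r:ℝ)*(n:ℝ)) * ((q:ℝ)^k * CB))) houter
      rw [Nat.card_Icc] at h17
      calc |∑ a ∈ Finset.Icc 1 (q-1), ∑ j ∈ Finset.range (r*n), ∑ m ∈ Finset.range (j+1),
            Cnj k q r n (q*j+a) / ((m:ℝ) + (a:ℝ)/q)^k|
          ≤ ((q-1+1-1 : ℕ):ℝ) * (((r:ℝ)*(n:ℝ)) * (((r:ℝ)*(n:ℝ)) * ((q:ℝ)^k * CB))) := h17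
        _ ≤ (q:ℝ) * (((r:ℝ)*(n:ℝ)) * (((r:ℝ)*(n:ℝ)) * ((q:ℝ)^k * CB))) := by
            refine mul_le_mul_of_nonneg_right ?_ (by positivity)
            have h18 : q-1+1-1 ≤ q := by omega
            exact_mod_cast h18
    refine le_trans (mul_le_mul (hsc k)
      (le_trans (abs_add_le _ _) (add_le_add hsum1 hsum2)) (abs_nonneg _) zero_le_one)
      (le_of_eq (by ring))
  -- conclude
  refine ⟨?_, ?_, ?_⟩
  · exact le_trans hrho0 (le_trans (mul_le_mul_of_nonneg_right hcoef0 hCB0) hEnv)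
  · exact le_trans hrho1 (le_trans (mul_le_mul_of_nonneg_right hcoef1 hCB0) hEnv)
  · intro a ha1 ha2
    exact le_trans (hrhoA a (by omega))
      (le_trans (mul_le_mul_of_nonneg_right hcoefA hCB0) hEnv)
end

section
/- Let k ≥ 2, q ≥ 3, and r > 2k be integers, and let n be a positive integer divisible by q! (in particular n is even). Then C_{n,j} = (−1)^{k−1} C_{n, rqn−j} for every j with 0 ≤ j ≤ rqn. -/
open Finset

lemma poch_reflect (x : ℝ) (m : ℕ) :
    poch x m = (-1 : ℝ) ^ m * poch (-x - m + 1) m := by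
  unfold poch
  rw [← Finset.prod_range_reflect (fun i => x + (i : ℝ)) m]
  have hcg : ∀ i ∈ Finset.range m,
      x + ((m - 1 - i : ℕ) : ℝ) = (-1) * (-x - (m : ℝ) + 1 + i) := by
    intro i hi
    simp only [Finset.mem_range] at hi
    have h1 : ((m - 1 - i : ℕ) : ℝ) = (m : ℝ) - 1 - i := by
      rw [Nat.sub_sub, Nat.cast_sub (by omega : 1 + i ≤ m)]
      push_cast; ring
    rw [h1]; ring
  rw [Finset.prod_congr rfl hcg, Finset.prod_mul_distrib, Finset.prod_const,
    Finset.card_range]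

theorem stmt_6 (k q r n : ℕ) (hk : 2 ≤ k) (hq : 3 ≤ q) (hr : 2 * k < r)
    (hn : 0 < n) (hfac : Nat.factorial q ∣ n) :
    ∀ j : ℕ, j ≤ r * q * n →
      Cnj k q r n j = (-1 : ℝ) ^ (k - 1) * Cnj k q r n (r * q * n - j) := by
  intro j hj
  have h2n : 2 ∣ n := dvd_trans (Nat.dvd_factorial (by norm_num) (by omega)) hfac
  obtain ⟨t, ht⟩ := h2n
  subst ht
  have hme : Even (q * (2 * t)) := ⟨q * t, by ring⟩
  have hme' : (-1 : ℝ) ^ (q * (2 * t)) = 1 := hme.neg_one_pow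
  set n := 2 * t with hnt
  have hq0 : (q : ℝ) ≠ 0 := by positivity
  have hcast : ((r * q * n - j : ℕ) : ℝ) = (r : ℝ) * q * n - j := by
    rw [Nat.cast_sub hj]; push_cast; ring
  have hs1 : (-1 : ℝ) ^ (r * q * n - j) = (-1) ^ j := by
    have hNe : Even (r * q * n) := ⟨r * q * t, by rw [hnt]; ring⟩
    have h1 : (-1 : ℝ) ^ (r * q * n - j) * (-1) ^ j = 1 := by
      rw [← pow_add, Nat.sub_add_cancel hj, hNe.neg_one_pow]
    have h2 : (-1 : ℝ) ^ j * (-1 : ℝ) ^ j = 1 := by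
      rw [← pow_add]; rw [← two_mul, pow_mul]; norm_num
    calc (-1 : ℝ) ^ (r * q * n - j)
        = (-1 : ℝ) ^ (r * q * n - j) * ((-1) ^ j * (-1) ^ j) := by rw [h2, mul_one]
      _ = ((-1 : ℝ) ^ (r * q * n - j) * (-1) ^ j) * (-1) ^ j := by ring
      _ = (-1 : ℝ) ^ j := by rw [h1, one_mul]
  have hch : Nat.choose (r * q * n) (r * q * n - j) = Nat.choose (r * q * n) j :=
    Nat.choose_symm hj
  have hD : poch (-((r * q * n - j : ℕ) : ℝ) / q - (q : ℝ) * n) (q * n)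
      = poch (-(j : ℝ) / q + (r : ℝ) * n + 1) (q * n) := by
    rw [poch_reflect, hme', one_mul]
    congr 1
    rw [hcast]; push_cast; field_simp; ring
  have hE : poch (-((r * q * n - j : ℕ) : ℝ) / q + (r : ℝ) * n + 1) (q * n)
      = poch (-(j : ℝ) / q - (q : ℝ) * n) (q * n) := by
    rw [poch_reflect, hme', one_mul]
    congr 1
    rw [hcast]; push_cast; field_simp; ring
  have hC : ((r * q * n : ℝ) - 2 * ((r * q * n - j : ℕ) : ℝ)) ^ (1 - k % 2)
      = (-1 : ℝ) ^ (1 - k % 2) * ((r * q * n : ℝ) - 2 * (j : ℝ)) ^ (1 - k % 2) := by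
    rw [hcast,
      show (r : ℝ) * q * n - 2 * ((r : ℝ) * q * n - j)
        = -((r : ℝ) * q * n - 2 * j) by push_cast; ring, neg_pow]
  simp only [Cnj, hs1, hch, hD, hE, hC]
  rcases Nat.even_or_odd k with he | ho
  · have hm : k % 2 = 0 := Nat.even_iff.mp he
    have hk1 : Odd (k - 1) := by
      obtain ⟨s, hs⟩ := he; exact ⟨s - 1, by omega⟩
    rw [hm, hk1.neg_one_pow]
    norm_num
    ring
  · have hm : k % 2 = 1 := Nat.odd_iff.mp ho
    have hk1 : Even (k - 1) := by
      obtain ⟨s, hs⟩ := ho; exact ⟨s, by omega⟩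
    rw [hm, hk1.neg_one_pow]
    norm_num
    ring
end

section
/- Let k ≥ 2 and q' ≥ 2 be integers, let p be a prime number, and set q = p·q'. Then V_k⁻(q') ⊆ V_k⁻(q) and V_k⁺(q') ⊆ V_k⁺(q). -/
open Finset

/-- The Hurwitz zeta value `ζ(k, x) = ∑_{m ≥ 0} 1/(m+x)^k`. -/
noncomputable def hzeta (k : ℕ) (x : ℝ) : ℝ := ∑' m : ℕ, 1 / ((m : ℝ) + x) ^ k

/-- The odd part `ζ⁻(k, a/q) = ζ(k, a/q) − (−1)^k ζ(k, 1 − a/q)`. -/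
noncomputable def zetaMinus (k a q : ℕ) : ℝ :=
  hzeta k ((a : ℝ) / q) - (-1 : ℝ) ^ k * hzeta k (1 - (a : ℝ) / q)

/-- The even part `ζ⁺(k, a/q) = ζ(k, a/q) + (−1)^k ζ(k, 1 − a/q)`. -/
noncomputable def zetaPlus (k a q : ℕ) : ℝ :=
  hzeta k ((a : ℝ) / q) + (-1 : ℝ) ^ k * hzeta k (1 - (a : ℝ) / q)

/-- `V_k⁻(q)` for `q ≥ 3`; for `q = 2` it is defined as `ℚ · ζ⁻(k, 1/2)`. -/
noncomputable def Vminus (k q : ℕ) : Submodule ℚ ℝ :=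
  if q = 2 then Submodule.span ℚ {zetaMinus k 1 2}
  else Submodule.span ℚ
    {x : ℝ | ∃ a : ℕ, 1 ≤ a ∧ 2 * a < q ∧ Nat.gcd a q = 1 ∧ x = zetaMinus k a q}

/-- `V_k⁺(q)` for `q ≥ 3`; for `q = 2` it is defined as `ℚ · ζ⁺(k, 1/2)`. -/
noncomputable def Vplus (k q : ℕ) : Submodule ℚ ℝ :=
  if q = 2 then Submodule.span ℚ {zetaPlus k 1 2}
  else Submodule.span ℚ
    {x : ℝ | ∃ a : ℕ, 1 ≤ a ∧ 2 * a < q ∧ Nat.gcd a q = 1 ∧ x = zetaPlus k a q}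

/-- `V_k(q)`, the ℚ-span of `ζ(k, a/q)` for `1 ≤ a < q` coprime to `q`
(for `q = 2` this gives `ℚ · ζ(k, 1/2)` as well). -/
noncomputable def Vfull (k q : ℕ) : Submodule ℚ ℝ :=
  Submodule.span ℚ
    {x : ℝ | ∃ a : ℕ, 1 ≤ a ∧ a < q ∧ Nat.gcd a q = 1 ∧ x = hzeta k ((a : ℝ) / q)}


lemma summable_hz (k : ℕ) (hk : 2 ≤ k) {x : ℝ} (hx : 0 < x) :
    Summable (fun n : ℕ => 1 / ((n : ℝ) + x) ^ k) := by
  have h2 : Summable (fun n : ℕ => 1 / (n : ℝ) ^ k) :=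
    Real.summable_one_div_nat_pow.mpr hk
  rw [← summable_nat_add_iff 1]
  apply Summable.of_nonneg_of_le (fun n => by positivity)
    (fun n => ?_) ((summable_nat_add_iff 1).mpr h2)
  apply one_div_le_one_div_of_le
  · positivity
  · apply pow_le_pow_left₀ (by positivity)
    push_cast; linarith

lemma hzeta_mult (k p : ℕ) (hk : 2 ≤ k) (hp : 0 < p) {x : ℝ} (hx : 0 < x) :
    ∑ j ∈ Finset.range p, hzeta k ((x + j) / p) = (p : ℝ) ^ k * hzeta k x := by
  haveI : NeZero p := ⟨hp.ne'⟩
  have hpR : (0:ℝ) < (p:ℝ) := by exact_mod_cast hp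
  have hsf : Summable (fun n : ℕ => 1 / ((n : ℝ) + x) ^ k) := summable_hz k hk hx
  set f : ℕ → ℝ := fun n => 1 / ((n : ℝ) + x) ^ k with hfdef
  set e : Fin p × ℕ ≃ ℕ := (Equiv.prodComm (Fin p) ℕ).trans (Nat.divModEquiv p).symm with he
  have heval : ∀ (j : Fin p) (m : ℕ), e (j, m) = m * p + (j : ℕ) := by
    intro j m; simp [he, Nat.divModEquiv]
  have hse : Summable (f ∘ e) := (Equiv.summable_iff e).mpr hsf
  have step1 : ∀ j ∈ Finset.range p, hzeta k ((x + j)/p)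
      = (p:ℝ)^k * ∑' m : ℕ, f (m * p + j) := by
    intro j hj
    rw [hzeta, ← tsum_mul_left]
    refine tsum_congr fun m => ?_
    have hA : (0:ℝ) < ((m * p + j : ℕ):ℝ) + x := by positivity
    have harg : (m:ℝ) + (x + j)/p = (((m * p + j : ℕ):ℝ) + x)/p := by
      push_cast; field_simp; ring
    rw [harg, hfdef]
    rw [div_pow, one_div, inv_div, div_eq_mul_inv, ← one_div]
  rw [Finset.sum_congr rfl step1, ← Finset.mul_sum]
  congr 1
  rw [hzeta]
  calc ∑ j ∈ Finset.range p, ∑' m, f (m * p + j)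
      = ∑ j : Fin p, ∑' m, f (m * p + (j:ℕ)) := (Fin.sum_univ_eq_sum_range _ p).symm
    _ = ∑ j : Fin p, ∑' m, (f ∘ e) (j, m) := by
        refine Finset.sum_congr rfl fun j _ => tsum_congr fun m => ?_
        rw [Function.comp_apply, heval]
    _ = ∑' (j : Fin p), ∑' m, (f ∘ e) (j, m) := (tsum_fintype _).symm
    _ = ∑' q : Fin p × ℕ, (f ∘ e) q := (Summable.tsum_prod' hse hse.prod_factor).symm
    _ = ∑' n, f n := e.tsum_eq f

noncomputable def zsgn (s : ℝ) (k a q : ℕ) : ℝ :=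
  hzeta k ((a : ℝ) / q) + s * hzeta k (1 - (a : ℝ) / q)

lemma zsgn_mult (s : ℝ) (k p q : ℕ) (hk : 2 ≤ k) (hp : 0 < p) (hq : 0 < q)
    (a : ℕ) (ha : 1 ≤ a) (haq : a < q) :
    (p:ℝ)^k * zsgn s k a q = ∑ j ∈ Finset.range p, zsgn s k (a + j * q) (p * q) := by
  have hqR : (0:ℝ) < (q:ℝ) := by exact_mod_cast hq
  have hpR : (0:ℝ) < (p:ℝ) := by exact_mod_cast hp
  have haR : (0:ℝ) < (a:ℝ) := by exact_mod_cast ha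
  have haqR : (a:ℝ) < (q:ℝ) := by exact_mod_cast haq
  have hx1 : (0:ℝ) < (a:ℝ)/q := by positivity
  have hx2 : (0:ℝ) < 1 - (a:ℝ)/q := by
    rw [sub_pos, div_lt_one hqR]; exact haqR
  have h1 := hzeta_mult k p hk hp hx1
  have h2 := hzeta_mult k p hk hp hx2
  have hstart : (p:ℝ)^k * zsgn s k a q
      = (p:ℝ)^k * hzeta k ((a:ℝ)/q) + s * ((p:ℝ)^k * hzeta k (1 - (a:ℝ)/q)) := by
    rw [zsgn]; ring
  rw [hstart, ← h1, ← h2,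
    ← Finset.sum_range_reflect (fun j => hzeta k ((1 - (a:ℝ)/q + j)/p)) p,
    Finset.mul_sum, ← Finset.sum_add_distrib]
  refine Finset.sum_congr rfl fun j hj => ?_
  have hjp : j < p := Finset.mem_range.mp hj
  have hcast : ((p - 1 - j : ℕ) : ℝ) = (p:ℝ) - 1 - (j:ℝ) := by
    have h' : p - 1 - j = p - (1 + j) := by omega
    rw [h', Nat.cast_sub (by omega)]
    push_cast; ring
  rw [zsgn, hcast]
  congr 2
  · push_cast
    rw [div_add' _ _ _ (by positivity : ((q:ℝ)) ≠ 0), div_div, mul_comm (q:ℝ) (p:ℝ)]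
  · push_cast; field_simp; ring

lemma zsgn_div (s : ℝ) (k p q b : ℕ) (hp : 0 < p) :
    zsgn s k (p * b) (p * q) = zsgn s k b q := by
  have hpR : ((p:ℝ)) ≠ 0 := by positivity
  rw [zsgn, zsgn]
  have : ((p * b : ℕ) : ℝ) / ((p * q : ℕ) : ℝ) = (b:ℝ)/(q:ℝ) := by
    push_cast; rw [mul_div_mul_left _ _ hpR]
  rw [this]

lemma zsgn_reflect (s : ℝ) (hs : s * s = 1) (k c q : ℕ) (hc : c ≤ q) (hq : 0 < q) :
    zsgn s k c q = s * zsgn s k (q - c) q := by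
  have hqR : ((q:ℝ)) ≠ 0 := by positivity
  have hcast : ((q - c : ℕ) : ℝ) / q = 1 - (c:ℝ)/q := by
    rw [Nat.cast_sub hc]; field_simp
  rw [zsgn, zsgn, hcast]
  have h2 : (1 : ℝ) - (1 - (c:ℝ)/q) = (c:ℝ)/q := by ring
  rw [h2]
  linear_combination (-(hzeta k ((c:ℝ)/q))) * hs

lemma span_iterate (W : Submodule ℚ ℝ) (r : ℚ) (hr0 : 0 < r) (hr1 : r < 1)
    (T : Finset ℕ) (g : ℕ → ℝ)
    (h : ∀ a ∈ T, ∃ b ∈ T, g a - r • g b ∈ W) :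
    ∀ a ∈ T, g a ∈ W := by
  classical
  choose! σ hσT hσW using h
  intro a ha
  have hT : ∀ n, σ^[n] a ∈ T := by
    intro n
    induction n with
    | zero => simpa using ha
    | succ n ih => rw [Function.iterate_succ_apply']; exact hσT _ ih
  have hW : ∀ n, g a - (r^n) • g (σ^[n] a) ∈ W := by
    intro n
    induction n with
    | zero => simp
    | succ n ih =>
      have h2 := hσW _ (hT n)
      have heq : g a - (r^(n+1)) • g (σ^[n+1] a)
          = (g a - r^n • g (σ^[n] a)) + r^n • (g (σ^[n] a) - r • g (σ (σ^[n] a))) := by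
        rw [Function.iterate_succ_apply']
        simp only [Rat.smul_def]
        push_cast
        ring
      rw [heq]
      exact W.add_mem ih (W.smul_mem _ h2)
  obtain ⟨m, -, n, -, hmn, hFeq⟩ :=
    Finset.exists_ne_map_eq_of_card_lt_of_maps_to
      (s := Finset.range (T.card + 1)) (t := T) (by simp) (fun n _ => hT n)
  have hscal : r^n - r^m ≠ 0 := by
    rcases lt_or_gt_of_ne hmn with h' | h'
    · have := pow_lt_pow_right_of_lt_one₀ hr0 hr1 h'
      intro hc; rw [sub_eq_zero] at hc; exact absurd hc (ne_of_lt this)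
    · have := pow_lt_pow_right_of_lt_one₀ hr0 hr1 h'
      intro hc; rw [sub_eq_zero] at hc; exact absurd hc.symm (ne_of_lt this)
  have hd : (r^n - r^m) • g (σ^[n] a) ∈ W := by
    have hsub := W.sub_mem (hW m) (hW n)
    have heq2 : (g a - r^m • g (σ^[m] a)) - (g a - r^n • g (σ^[n] a))
        = (r^n - r^m) • g (σ^[n] a) := by
      rw [hFeq]
      simp only [Rat.smul_def]
      push_cast
      ring
    rwa [heq2] at hsub
  have hgf : g (σ^[n] a) ∈ W := (Submodule.smul_mem_iff W hscal).mp hd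
  have hfin : g a = (g a - r^n • g (σ^[n] a)) + r^n • g (σ^[n] a) := by ring_nf
  rw [hfin]
  exact W.add_mem (hW n) (W.smul_mem _ hgf)

lemma key_mem (s : ℚ) (hs : s * s = 1) (k q' p : ℕ) (hk : 2 ≤ k) (hq' : 2 ≤ q')
    (hp : Nat.Prime p) :
    ∀ a : ℕ, 1 ≤ a → a < q' → Nat.gcd a q' = 1 →
      zsgn (s:ℝ) k a q' ∈ Submodule.span ℚ
        {x : ℝ | ∃ c : ℕ, 1 ≤ c ∧ 2 * c < p * q' ∧ Nat.gcd c (p * q') = 1 ∧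
          x = zsgn (s:ℝ) k c (p * q')} := by
  set W := Submodule.span ℚ
    {x : ℝ | ∃ c : ℕ, 1 ≤ c ∧ 2 * c < p * q' ∧ Nat.gcd c (p * q') = 1 ∧
      x = zsgn (s:ℝ) k c (p * q')} with hWdef
  have hp2 := hp.two_le
  have hppos : 0 < p := hp.pos
  have hq'pos : 0 < q' := by omega
  have hpq4 : 4 ≤ p * q' := by
    calc 4 = 2 * 2 := rfl
    _ ≤ p * q' := Nat.mul_le_mul hp2 hq'
  have hsR : (s:ℝ) * (s:ℝ) = 1 := by exact_mod_cast hs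
  have stepA : ∀ c : ℕ, 1 ≤ c → c < p * q' → Nat.gcd c (p * q') = 1 →
      zsgn (s:ℝ) k c (p*q') ∈ W := by
    intro c h1 h2 h3
    rcases lt_trichotomy (2*c) (p*q') with hlt | heq | hgt
    · exact Submodule.subset_span ⟨c, h1, hlt, h3, rfl⟩
    · exfalso
      have hcd : c ∣ p * q' := ⟨2, by omega⟩
      rw [Nat.gcd_eq_left hcd] at h3
      omega
    · have hco : Nat.gcd (p*q' - c) (p*q') = 1 := by
        have hd1 : Nat.gcd (p*q'-c) (p*q') ∣ c := by
          have hd := Nat.dvd_sub (Nat.gcd_dvd_right (p*q'-c) (p*q'))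
            (Nat.gcd_dvd_left (p*q'-c) (p*q'))
          rwa [Nat.sub_sub_self h2.le] at hd
        have hd2 : Nat.gcd (p*q'-c) (p*q') ∣ Nat.gcd c (p*q') :=
          Nat.dvd_gcd hd1 (Nat.gcd_dvd_right _ _)
        rw [h3] at hd2
        exact Nat.dvd_one.mp hd2
      rw [zsgn_reflect (s:ℝ) hsR k c (p*q') h2.le (by positivity)]
      rw [show (s:ℝ) * zsgn (s:ℝ) k (p*q'-c) (p*q')
          = s • zsgn (s:ℝ) k (p*q'-c) (p*q') from (Rat.smul_def _ _).symm]
      exact Submodule.smul_mem _ _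
        (Submodule.subset_span ⟨p*q'-c, by omega, by omega, hco, rfl⟩)
  have hterm_cop : ∀ a j : ℕ, Nat.gcd a q' = 1 → ¬ p ∣ (a + j*q') →
      Nat.gcd (a + j*q') (p*q') = 1 := by
    intro a j hco hnd
    have c1 : Nat.Coprime (a + j*q') q' := (Nat.coprime_add_mul_right_left a q' j).mpr hco
    have c2 : Nat.Coprime (a + j*q') p :=
      ((hp.coprime_iff_not_dvd).mpr hnd).symm
    exact Nat.Coprime.mul_right c2 c1
  have hbound : ∀ a j : ℕ, 1 ≤ a → a < q' → j < p → 1 ≤ a + j*q' ∧ a + j*q' < p*q' := by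
    intro a j h1 h2 hj
    refine ⟨by omega, ?_⟩
    have hmul : j * q' ≤ (p-1) * q' := Nat.mul_le_mul_right q' (by omega)
    have hpe : (p-1) * q' + q' = p * q' := by
      cases p with
      | zero => omega
      | succ n => simp [Nat.succ_sub_one]; ring
    omega
  set T : Finset ℕ := (Finset.range q').filter (fun a => 1 ≤ a ∧ Nat.gcd a q' = 1) with hT
  set r : ℚ := 1 / (p:ℚ)^k with hr
  have hpQ : (1:ℚ) < (p:ℚ)^k := by
    have h2p : (2:ℚ) ≤ (p:ℚ) := by exact_mod_cast hp2
    calc (1:ℚ) = 1^k := (one_pow k).symm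
      _ < (p:ℚ)^k := by
          apply pow_lt_pow_left₀ (by exact_mod_cast (by omega : 1 < p)) (by norm_num) (by omega)
  have hr0 : 0 < r := by rw [hr]; positivity
  have hr1 : r < 1 := by rw [hr, div_lt_one (by positivity)]; exact hpQ
  have hpkR : ((p:ℝ))^k ≠ 0 := by positivity
  have hrcast : ((r:ℚ):ℝ) = 1 / ((p:ℝ))^k := by rw [hr]; push_cast; ring
  have main : ∀ a ∈ T, ∃ b ∈ T,
      zsgn (s:ℝ) k a q' - r • zsgn (s:ℝ) k b q' ∈ W := by
    intro a haT
    simp only [hT, Finset.mem_filter, Finset.mem_range] at haT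
    obtain ⟨haq, h1, hco⟩ := haT
    have hmult := zsgn_mult (s:ℝ) k p q' hk hppos hq'pos a h1 haq
    by_cases hex : ∃ j, j < p ∧ p ∣ (a + j*q')
    · obtain ⟨j0, hj0p, hj0d⟩ := hex
      have hpq : ¬ p ∣ q' := by
        intro hdvd
        have hpa : p ∣ a := by
          have hsub := Nat.dvd_sub hj0d (Dvd.dvd.mul_left hdvd j0)
          simpa using hsub
        have hdg : p ∣ Nat.gcd a q' := Nat.dvd_gcd hpa hdvd
        rw [hco] at hdg
        exact absurd (Nat.dvd_one.mp hdg) (by omega)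
      set b := (a + j0*q') / p with hb
      have hbmul : p * b = a + j0*q' := Nat.mul_div_cancel' hj0d
      have hbnd := hbound a j0 h1 haq hj0p
      have hb1 : 1 ≤ b := by
        rw [hb]
        exact (Nat.one_le_div_iff hppos).mpr (Nat.le_of_dvd (lt_of_lt_of_le (by omega : 0 < a) (Nat.le_add_right a (j0*q'))) hj0d)
      have hbq : b < q' := by
        have hlt : p * b < p * q' := by rw [hbmul]; exact hbnd.2
        exact Nat.lt_of_mul_lt_mul_left hlt
      have hbco : Nat.gcd b q' = 1 := by
        have c1 : Nat.Coprime (a + j0*q') q' :=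
          (Nat.coprime_add_mul_right_left a q' j0).mpr hco
        have hbdvd : b ∣ a + j0*q' := ⟨p, by rw [← hbmul]; ring⟩
        exact Nat.Coprime.coprime_dvd_left hbdvd c1
      have huniq : ∀ j, j < p → p ∣ (a + j*q') → j = j0 := by
        intro j hj hdj
        have e1 : (a + j*q') ≡ 0 [MOD p] := (Nat.modEq_zero_iff_dvd).mpr hdj
        have e2 : (a + j0*q') ≡ 0 [MOD p] := (Nat.modEq_zero_iff_dvd).mpr hj0d
        have hmod : j*q' ≡ j0*q' [MOD p] :=
          Nat.ModEq.add_left_cancel' a (e1.trans e2.symm)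
        have hcop : Nat.gcd p q' = 1 := (hp.coprime_iff_not_dvd).mpr hpq
        have hjj := Nat.ModEq.cancel_right_of_coprime hcop hmod
        rwa [Nat.ModEq, Nat.mod_eq_of_lt hj, Nat.mod_eq_of_lt hj0p] at hjj
      have hsplit : zsgn (s:ℝ) k (a + j0*q') (p*q')
          + ∑ j ∈ (Finset.range p).erase j0, zsgn (s:ℝ) k (a+j*q') (p*q')
          = ∑ j ∈ Finset.range p, zsgn (s:ℝ) k (a+j*q') (p*q') :=
        Finset.add_sum_erase (Finset.range p) (fun j => zsgn (s:ℝ) k (a + j*q') (p*q')) (Finset.mem_range.mpr hj0p)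
      have hWsum : ∑ j ∈ (Finset.range p).erase j0, zsgn (s:ℝ) k (a+j*q') (p*q') ∈ W := by
        refine Submodule.sum_mem _ fun j hj => ?_
        have hjne := (Finset.mem_erase.mp hj).1
        have hjp := Finset.mem_range.mp (Finset.mem_erase.mp hj).2
        have hnd : ¬ p ∣ (a + j*q') := fun hd => hjne (huniq j hjp hd)
        exact stepA _ (hbound a j h1 haq hjp).1 (hbound a j h1 haq hjp).2
          (hterm_cop a j hco hnd)
      have hj0val : zsgn (s:ℝ) k (a + j0*q') (p*q') = zsgn (s:ℝ) k b q' := by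
        rw [← hbmul]; exact zsgn_div (s:ℝ) k p q' b hppos
      refine ⟨b, ?_, ?_⟩
      · simp only [hT, Finset.mem_filter, Finset.mem_range]
        exact ⟨hbq, hb1, hbco⟩
      · have hcalc : zsgn (s:ℝ) k a q' - r • zsgn (s:ℝ) k b q'
            = r • ((p:ℝ)^k * zsgn (s:ℝ) k a q' - zsgn (s:ℝ) k b q') := by
          rw [Rat.smul_def, Rat.smul_def, hrcast]
          field_simp
        rw [hcalc]
        apply Submodule.smul_mem
        have heq3 : (p:ℝ)^k * zsgn (s:ℝ) k a q' - zsgn (s:ℝ) k b q'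
            = ∑ j ∈ (Finset.range p).erase j0, zsgn (s:ℝ) k (a+j*q') (p*q') := by
          rw [hmult, ← hsplit, hj0val]; ring
        rw [heq3]; exact hWsum
    · push_neg at hex
      have hWall : (p:ℝ)^k * zsgn (s:ℝ) k a q' ∈ W := by
        rw [hmult]
        refine Submodule.sum_mem _ fun j hj => ?_
        have hjp := Finset.mem_range.mp hj
        exact stepA _ (hbound a j h1 haq hjp).1 (hbound a j h1 haq hjp).2
          (hterm_cop a j hco (hex j hjp))
      have hmem : zsgn (s:ℝ) k a q' ∈ W := by
        have heq4 : zsgn (s:ℝ) k a q' = r • ((p:ℝ)^k * zsgn (s:ℝ) k a q') := by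
          rw [Rat.smul_def, hrcast]; field_simp; try ring
        rw [heq4]; exact Submodule.smul_mem _ _ hWall
      refine ⟨a, ?_, ?_⟩
      · simp only [hT, Finset.mem_filter, Finset.mem_range]; exact ⟨haq, h1, hco⟩
      · have heq5 : zsgn (s:ℝ) k a q' - r • zsgn (s:ℝ) k a q'
            = (1 - r) • zsgn (s:ℝ) k a q' := by
          rw [Rat.smul_def, Rat.smul_def]; push_cast; ring
        rw [heq5]; exact Submodule.smul_mem _ _ hmem
  intro a h1 h2 h3
  exact span_iterate W r hr0 hr1 T _ main a
    (by simp only [hT, Finset.mem_filter, Finset.mem_range]; exact ⟨h2, h1, h3⟩)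

lemma zetaMinus_eq_zsgn (k a q : ℕ) :
    zetaMinus k a q = zsgn (((-(-1:ℚ)^k : ℚ)):ℝ) k a q := by
  rw [zetaMinus, zsgn]; push_cast; ring

lemma zetaPlus_eq_zsgn (k a q : ℕ) :
    zetaPlus k a q = zsgn ((((-1:ℚ)^k : ℚ)):ℝ) k a q := by
  rw [zetaPlus, zsgn]; push_cast; ring

theorem stmt_7 (k q' p : ℕ) (hk : 2 ≤ k) (hq' : 2 ≤ q') (hp : Nat.Prime p) :
    Vminus k q' ≤ Vminus k (p * q') ∧ Vplus k q' ≤ Vplus k (p * q') := by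
  have hp2 := hp.two_le
  have hpq4 : 4 ≤ p * q' := by
    calc 4 = 2 * 2 := rfl
    _ ≤ p * q' := Nat.mul_le_mul hp2 hq'
  have hpq2 : p * q' ≠ 2 := by omega
  have hsm : (-(-1:ℚ)^k) * (-(-1:ℚ)^k) = 1 := by
    rw [neg_mul_neg, ← pow_add, ← two_mul, pow_mul]; norm_num
  have hsp : ((-1:ℚ)^k) * ((-1:ℚ)^k) = 1 := by
    rw [← pow_add, ← two_mul, pow_mul]; norm_num
  constructor
  · unfold Vminus
    rw [if_neg hpq2]
    have hset : {x : ℝ | ∃ a, 1 ≤ a ∧ 2*a < p*q' ∧ Nat.gcd a (p*q') = 1 ∧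
          x = zetaMinus k a (p*q')}
        = {x : ℝ | ∃ c, 1 ≤ c ∧ 2*c < p*q' ∧ Nat.gcd c (p*q') = 1 ∧
          x = zsgn (((-(-1:ℚ)^k : ℚ)):ℝ) k c (p*q')} := by
      ext x; simp only [Set.mem_setOf_eq, zetaMinus_eq_zsgn]
    by_cases hq2 : q' = 2
    · subst hq2
      rw [if_pos rfl, Submodule.span_le]
      intro x hx
      rw [Set.mem_singleton_iff] at hx
      subst hx
      rw [SetLike.mem_coe, hset, zetaMinus_eq_zsgn]
      exact key_mem _ hsm k 2 p hk le_rfl hp 1 le_rfl one_lt_two (Nat.gcd_one_left 2)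
    · rw [if_neg hq2, Submodule.span_le]
      rintro x ⟨a, h1, h2, h3, rfl⟩
      rw [SetLike.mem_coe, hset, zetaMinus_eq_zsgn]
      exact key_mem _ hsm k q' p hk hq' hp a h1 (by omega) h3
  · unfold Vplus
    rw [if_neg hpq2]
    have hset : {x : ℝ | ∃ a, 1 ≤ a ∧ 2*a < p*q' ∧ Nat.gcd a (p*q') = 1 ∧
          x = zetaPlus k a (p*q')}
        = {x : ℝ | ∃ c, 1 ≤ c ∧ 2*c < p*q' ∧ Nat.gcd c (p*q') = 1 ∧
          x = zsgn ((((-1:ℚ)^k : ℚ)):ℝ) k c (p*q')} := by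
      ext x; simp only [Set.mem_setOf_eq, zetaPlus_eq_zsgn]
    by_cases hq2 : q' = 2
    · subst hq2
      rw [if_pos rfl, Submodule.span_le]
      intro x hx
      rw [Set.mem_singleton_iff] at hx
      subst hx
      rw [SetLike.mem_coe, hset, zetaPlus_eq_zsgn]
      exact key_mem _ hsp k 2 p hk le_rfl hp 1 le_rfl one_lt_two (Nat.gcd_one_left 2)
    · rw [if_neg hq2, Submodule.span_le]
      rintro x ⟨a, h1, h2, h3, rfl⟩
      rw [SetLike.mem_coe, hset, zetaPlus_eq_zsgn]
      exact key_mem _ hsp k q' p hk hq' hp a h1 (by omega) h3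
end
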